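/- arXiv:2506.10222 — 5 statements merged into one kernel-verified Lean document; each statement's English description precedes it below -/
import Mathlib

section
/- Consider an infinite sequence of triples of positive integers (a_1,b_1,c_1), (a_2,b_2,c_2), ... such that for each i the integers a_i, b_i, c_i are pairwise relatively prime, 2 ≤ a_i < b_i < c_i, and a_1 < a_2 < a_3 < ⋯. Let S_i = ⟨b_i c_i, a_i c_i, a_i b_i⟩ be the supersymmetric numerical semigroup corresponding to (a_i, b_i, c_i). Then lim_{i→∞} r(S_i)/g(S_i) = 1/6. -/
/-- A numerical semigroup: a subset of ℕ containing 0, closed under addition,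
with finite complement. -/
def IsNumericalSemigroup (S : Set ℕ) : Prop :=
  0 ∈ S ∧ (∀ a ∈ S, ∀ b ∈ S, a + b ∈ S) ∧ Sᶜ.Finite

/-- The genus: the number of gaps. -/
noncomputable def genus (S : Set ℕ) : ℕ := Sᶜ.ncard

/-- The ordinarization number: `r(S) = #(S ∩ {1, ..., g(S)})`. -/
noncomputable def ordNum (S : Set ℕ) : ℕ := (S ∩ Set.Icc 1 (genus S)).ncard

open Finset
set_option linter.unusedSectionVars false
namespace SS

lemma modeq_add_mul (s z m : ℕ) : s ≡ s + z * m [MOD m] :=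
  (Nat.add_mul_mod_self_right s z m).symm


lemma cancel_mod {N u x x' : ℕ} (hcop : Nat.Coprime u N) (hx : x < N) (hx' : x' < N)
    (h : x * u ≡ x' * u [MOD N]) : x = x' :=
  (Nat.ModEq.cancel_right_of_coprime (by simpa [Nat.Coprime, Nat.gcd_comm] using hcop)
    h).eq_of_lt_of_lt hx hx'

lemma exists_inv_mod {N u : ℕ} (hN : 0 < N) (hcop : Nat.Coprime u N) (t : ℕ) :
    ∃ x, x < N ∧ N ∣ t + x * u := by
  classical
  set f : ℕ → ℕ := fun x => (t + x * u) % N with hf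
  have hinj : Set.InjOn f (range N) := by
    intro x hx x' hx' hxy
    simp only [mem_coe, mem_range] at hx hx'
    exact cancel_mod hcop hx hx' (Nat.ModEq.add_left_cancel' t hxy)
  have hsub : Finset.image f (range N) ⊆ range N := by
    intro m hm
    simp only [mem_image, mem_range] at hm ⊢
    obtain ⟨x, -, rfl⟩ := hm
    exact Nat.mod_lt _ hN
  have hcard : (range N).card ≤ (Finset.image f (range N)).card := by
    rw [Finset.card_image_of_injOn hinj]
  have h0 : (0 : ℕ) ∈ Finset.image f (range N) := by
    rw [Finset.eq_of_subset_of_card_le hsub hcard]; simpa using hN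
  simp only [mem_image, mem_range] at h0
  obtain ⟨x, hx, hfx⟩ := h0
  exact ⟨x, hx, Nat.dvd_of_mod_eq_zero hfx⟩

section Fixed
variable {a b c : ℕ} (ha : 2 ≤ a) (hab : a < b) (hbc : b < c)
  (cab : Nat.Coprime a b) (cac : Nat.Coprime a c) (cbc : Nat.Coprime b c)

include ha hab in
lemma ha0 : 0 < a := by omega
include ha hab in
lemma hb0 : 0 < b := by omega
include ha hab hbc in
lemma hc0 : 0 < c := by omega

include cab cac in
lemma cop_pa : Nat.Coprime (b * c) a := (Nat.Coprime.mul_right cab cac).symm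

include cab cbc in
lemma cop_qb : Nat.Coprime (a * c) b := (Nat.Coprime.mul_right cab.symm cbc).symm

include cab cac cbc in
lemma canonical_unique {x y x' y' : ℕ} (hxa : x < a) (hyb : y < b) (hxa' : x' < a) (hyb' : y' < b)
    (h : x * (b * c) + y * (a * c) ≡ x' * (b * c) + y' * (a * c) [MOD a * b]) :
    x = x' ∧ y = y' := by
  have hda : (a : ℕ) ∣ a * b := Dvd.intro b rfl
  have hma : x * (b * c) + y * (a * c) ≡ x' * (b * c) + y' * (a * c) [MOD a] :=
    h.of_dvd hda
  have hya : y * (a * c) ≡ 0 [MOD a] :=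
    (Nat.modEq_zero_iff_dvd).2 ⟨y * c, by ring⟩
  have hya' : y' * (a * c) ≡ 0 [MOD a] :=
    (Nat.modEq_zero_iff_dvd).2 ⟨y' * c, by ring⟩
  have hxx : x * (b * c) ≡ x' * (b * c) [MOD a] := by
    have h1 : x * (b * c) + y * (a * c) ≡ x * (b * c) + 0 [MOD a] :=
      (Nat.ModEq.refl _).add hya
    have h2 : x' * (b * c) + y' * (a * c) ≡ x' * (b * c) + 0 [MOD a] :=
      (Nat.ModEq.refl _).add hya'
    simpa using (h1.symm.trans hma).trans h2
  have hx : x = x' := cancel_mod (cop_pa cab cac) hxa hxa' hxx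
  subst hx
  have hdb : (b : ℕ) ∣ a * b := Dvd.intro_left a rfl
  have hmb : x * (b * c) + y * (a * c) ≡ x * (b * c) + y' * (a * c) [MOD b] := h.of_dvd hdb
  have hyy : y * (a * c) ≡ y' * (a * c) [MOD b] := Nat.ModEq.add_left_cancel' _ hmb
  exact ⟨rfl, cancel_mod (cop_qb cab cbc) hyb hyb' hyy⟩

include ha hab cab cac cbc in
lemma exists_canonical (n : ℕ) :
    ∃ x y, x < a ∧ y < b ∧ n ≡ x * (b * c) + y * (a * c) [MOD a * b] := by
  obtain ⟨x', hx', hdx⟩ := exists_inv_mod (ha0 ha hab) (cop_pa cab cac) n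
  obtain ⟨y', hy', hdy⟩ := exists_inv_mod (hb0 ha hab) (cop_qb cab cbc) (n + x' * (b * c))
  -- a*b ∣ n + x'*(b*c) + y'*(a*c)
  have hda : a ∣ n + x' * (b * c) + y' * (a * c) :=
    Dvd.dvd.add hdx ⟨y' * c, by ring⟩
  have hdb : b ∣ n + x' * (b * c) + y' * (a * c) := by
    have := hdy
    rwa [add_assoc] at this ⊢
  have hdab : a * b ∣ n + x' * (b * c) + y' * (a * c) :=
    Nat.Coprime.mul_dvd_of_dvd_of_dvd cab hda hdb
  refine ⟨(a - x') % a, (b - y') % b, Nat.mod_lt _ (ha0 ha hab), Nat.mod_lt _ (hb0 ha hab), ?_⟩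
  set x := (a - x') % a with hxdef
  set y := (b - y') % b with hydef
  have hxx' : a ∣ x + x' := by
    rcases Nat.eq_zero_or_pos x' with h0 | hpos
    · subst h0; simp [hxdef]
    · have : x = a - x' := Nat.mod_eq_of_lt (by omega)
      rw [this]; exact ⟨1, by omega⟩
  have hyy' : b ∣ y + y' := by
    rcases Nat.eq_zero_or_pos y' with h0 | hpos
    · subst h0; simp [hydef]
    · have : y = b - y' := Nat.mod_eq_of_lt (by omega)
      rw [this]; exact ⟨1, by omega⟩
  have hd1 : a * b ∣ (x + x') * (b * c) := by
    obtain ⟨t, ht⟩ := hxx'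
    exact ⟨t * c, by rw [ht]; ring⟩
  have hd2 : a * b ∣ (y + y') * (a * c) := by
    obtain ⟨t, ht⟩ := hyy'
    exact ⟨t * c, by rw [ht]; ring⟩
  -- n + (n + x'p + y'q) + (x+x')p + (y+y')q ≡ ...
  have key : a * b ∣ (x + x') * (b * c) + (y + y') * (a * c) := hd1.add hd2
  -- n ≡ x*p + y*q [MOD ab]
  have e1 : n + ((n + x' * (b * c) + y' * (a * c)) + ((x + x') * (b * c) + (y + y') * (a * c)))
      = (x * (b * c) + y * (a * c)) + ((n + x' * (b * c) + y' * (a * c)) + (n + x' * (b * c) + y' * (a * c))) := by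
    ring
  have m1 : n ≡ n + ((n + x' * (b * c) + y' * (a * c)) + ((x + x') * (b * c) + (y + y') * (a * c))) [MOD a*b] :=
    (Nat.modEq_iff_dvd' (Nat.le_add_right _ _)).2 (by simpa using (hdab.add key))
  have m2 : (x * (b * c) + y * (a * c)) ≡ (x * (b * c) + y * (a * c)) + ((n + x' * (b * c) + y' * (a * c)) + (n + x' * (b * c) + y' * (a * c))) [MOD a*b] :=
    (Nat.modEq_iff_dvd' (Nat.le_add_right _ _)).2 (by simpa using (hdab.add hdab))
  rw [e1] at m1
  exact m1.trans m2.symm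

include ha hab in
lemma mem_iff (n : ℕ) :
    (∃ X Y Z, X * (b*c) + Y * (a*c) + Z * (a*b) = n) ↔
    (∃ x y z, x < a ∧ y < b ∧ x*(b*c) + y*(a*c) + z*(a*b) = n) := by
  constructor
  · rintro ⟨X, Y, Z, rfl⟩
    obtain ⟨x, d, hx, rfl⟩ : ∃ x d, x < a ∧ X = x + a*d :=
      ⟨X % a, X / a, Nat.mod_lt _ (by omega), by rw [Nat.mod_add_div]⟩
    obtain ⟨y, e, hy, rfl⟩ : ∃ y e, y < b ∧ Y = y + b*e :=
      ⟨Y % b, Y / b, Nat.mod_lt _ (by omega), by rw [Nat.mod_add_div]⟩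
    exact ⟨x, y, Z + d*c + e*c, hx, hy, by ring⟩
  · rintro ⟨x, y, z, -, -, rfl⟩
    exact ⟨x, y, z, rfl⟩

include ha hab hbc cab cac cbc in
lemma mem_iff_canonical {n x y : ℕ} (hx : x < a) (hy : y < b)
    (hcan : n ≡ x*(b*c) + y*(a*c) [MOD a*b]) :
    (∃ X Y Z, X * (b*c) + Y * (a*c) + Z * (a*b) = n) ↔ x*(b*c) + y*(a*c) ≤ n := by
  constructor
  · intro h
    obtain ⟨x', y', z, hx', hy', heq⟩ := (mem_iff ha hab n).1 h
    have hle : x'*(b*c) + y'*(a*c) ≤ n := by omega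
    have hmod : x'*(b*c) + y'*(a*c) ≡ n [MOD a*b] :=
      heq ▸ modeq_add_mul (x'*(b*c) + y'*(a*c)) z (a*b)
    obtain ⟨hx2, hy2⟩ := canonical_unique cab cac cbc hx' hy' hx hy
      (hmod.trans hcan)
    subst hx2; subst hy2; exact hle
  · intro hle
    have hd : a*b ∣ n - (x*(b*c) + y*(a*c)) := (Nat.modEq_iff_dvd' hle).1 hcan.symm
    obtain ⟨z, hz⟩ := hd
    have hz' : z * (a*b) = a*b*z := mul_comm _ _
    exact ⟨x, y, z, by omega⟩

include ha hab hbc cab cac cbc in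
lemma rep_unique {x y z x' y' z' : ℕ} (hx : x < a) (hy : y < b) (hx' : x' < a) (hy' : y' < b)
    (h : x*(b*c) + y*(a*c) + z*(a*b) = x'*(b*c) + y'*(a*c) + z'*(a*b)) :
    x = x' ∧ y = y' ∧ z = z' := by
  have hm : x*(b*c) + y*(a*c) ≡ x'*(b*c) + y'*(a*c) [MOD a*b] := by
    have h1 := modeq_add_mul (x*(b*c) + y*(a*c)) z (a*b)
    have h2 := modeq_add_mul (x'*(b*c) + y'*(a*c)) z' (a*b)
    rw [h] at h1
    exact h1.trans h2.symm
  obtain ⟨hxx, hyy⟩ := canonical_unique cab cac cbc hx hy hx' hy' hm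
  subst hxx; subst hyy
  refine ⟨rfl, rfl, ?_⟩
  have hab0 : 0 < a*b := Nat.mul_pos (by omega) (by omega)
  have : z*(a*b) = z'*(a*b) := by omega
  exact Nat.eq_of_mul_eq_mul_right hab0 this

end Fixed


def EF (a b c T : ℕ) : Finset (ℕ × ℕ × ℕ) :=
  ((range a) ×ˢ (range b) ×ˢ (range (T+1))).filter
    (fun t => t.1*(b*c) + t.2.1*(a*c) + t.2.2*(a*b) ≤ T)

lemma mem_EF {a b c T : ℕ} {t : ℕ × ℕ × ℕ} :
    t ∈ EF a b c T ↔ t.1 < a ∧ t.2.1 < b ∧ t.2.2 < T+1 ∧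
      t.1*(b*c) + t.2.1*(a*c) + t.2.2*(a*b) ≤ T := by
  simp [EF, Finset.mem_filter, Finset.mem_product, and_assoc]

def GF (a b c : ℕ) : Finset (Σ _ : ℕ, Σ _ : ℕ, ℕ) :=
  (range a).sigma (fun x => (range b).sigma (fun y =>
    Finset.Icc 1 ((x*(b*c) + y*(a*c)) / (a*b))))

lemma mem_GF {a b c : ℕ} {t : Σ _ : ℕ, Σ _ : ℕ, ℕ} :
    t ∈ GF a b c ↔ t.1 < a ∧ t.2.1 < b ∧ 1 ≤ t.2.2 ∧
      t.2.2 ≤ (t.1*(b*c) + t.2.1*(a*c))/(a*b) := by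
  simp [GF, Finset.mem_sigma, Finset.mem_Icc, and_assoc]

lemma card_GF (a b c : ℕ) : (GF a b c).card
    = ∑ x ∈ range a, ∑ y ∈ range b, (x*(b*c) + y*(a*c))/(a*b) := by
  simp [GF, Finset.card_sigma, Nat.card_Icc]

def BF (N : ℕ) : Finset (Σ _ : ℕ, Σ _ : ℕ, ℕ) :=
  (range (N+1)).sigma (fun u => (range (N+1-u)).sigma (fun v => range (N+1-u-v)))

lemma mem_BF {N : ℕ} {t : Σ _ : ℕ, Σ _ : ℕ, ℕ} :
    t ∈ BF N ↔ t.1 + t.2.1 + t.2.2 ≤ N := by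
  simp only [BF, Finset.mem_sigma, Finset.mem_range]
  omega

lemma sum_desc (m : ℕ) : 2 * ∑ v ∈ range m, (m - v) = m * (m+1) := by
  have h1 : ∑ v ∈ range m, (m - v) = ∑ v ∈ range m, (v + 1) := by
    rw [← Finset.sum_range_reflect (fun v => v + 1) m]
    exact Finset.sum_congr rfl (fun j hj => by rw [Finset.mem_range] at hj; omega)
  have h2 : ∑ v ∈ range (m+1), v = ∑ v ∈ range m, (v+1) := by
    rw [Finset.sum_range_succ']; simp
  have h3 := Finset.sum_range_id_mul_two (m+1)
  have h4 : (m+1) * (m+1-1) = m*(m+1) := by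
    rw [Nat.add_sub_cancel]; ring
  omega

lemma cube (n : ℕ) : 6 * ∑ i ∈ range n, (i+1)*(i+2) = 2*(n*(n+1)*(n+2)) := by
  induction n with
  | zero => simp
  | succ n ih => rw [Finset.sum_range_succ, Nat.mul_add, ih]; ring

lemma card_BF (N : ℕ) : 6 * (BF N).card = (N+1)*(N+2)*(N+3) := by
  have hc : (BF N).card = ∑ u ∈ range (N+1), ∑ v ∈ range (N+1-u), (N+1-u-v) := by
    simp [BF, Finset.card_sigma]
  have h2 : 2 * (BF N).card = ∑ u ∈ range (N+1), (N+1-u) * (N+1-u+1) := by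
    rw [hc, Finset.mul_sum]
    exact Finset.sum_congr rfl (fun u hu => sum_desc (N+1-u))
  have h3 : ∑ u ∈ range (N+1), (N+1-u)*(N+1-u+1) = ∑ i ∈ range (N+1), (i+1)*(i+2) := by
    rw [← Finset.sum_range_reflect (fun i => (i+1)*(i+2)) (N+1)]
    refine Finset.sum_congr rfl (fun j hj => ?_)
    rw [Finset.mem_range] at hj
    congr 1 <;> omega
  have h4 := cube (N+1)
  have h5 : (N+1)*(N+1+1)*(N+1+2) = (N+1)*(N+2)*(N+3) := by ring
  omega


end SS

namespace SS

lemma recover {m x i x' i' : ℕ} (hi : i < m) (hi' : i' < m)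
    (h : x*m + i = x'*m + i') : x = x' ∧ i = i' := by
  have hm : 0 < m := by omega
  have h1 : (x*m + i) % m = i := by rw [mul_comm x m, Nat.mul_add_mod, Nat.mod_eq_of_lt hi]
  have h2 : (x'*m + i') % m = i' := by rw [mul_comm x' m, Nat.mul_add_mod, Nat.mod_eq_of_lt hi']
  have hii : i = i' := by rw [← h1, ← h2, h]
  exact ⟨Nat.eq_of_mul_eq_mul_right hm (by omega), hii⟩

section Count
variable {a b c : ℕ} (ha : 2 ≤ a) (hab : a < b) (hbc : b < c)
  (cab : Nat.Coprime a b) (cac : Nat.Coprime a c) (cbc : Nat.Coprime b c)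

include ha hab hbc cab cac cbc in
lemma compl_eq :
    {m : ℕ | ∃ X Y Z, X*(b*c) + Y*(a*c) + Z*(a*b) = m}ᶜ
      = (fun t : Σ _ : ℕ, Σ _ : ℕ, ℕ => t.1*(b*c) + t.2.1*(a*c) - t.2.2*(a*b)) ''
        ↑(GF a b c) := by
  have hw : 0 < a*b := Nat.mul_pos (by omega) (by omega)
  ext n
  simp only [Set.mem_compl_iff, Set.mem_setOf_eq, Set.mem_image, Finset.mem_coe]
  constructor
  · intro hn
    obtain ⟨x, y, hx, hy, hcan⟩ := exists_canonical ha hab cab cac cbc n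
    have hnot : ¬ (x*(b*c) + y*(a*c) ≤ n) := fun hle =>
      hn ((mem_iff_canonical ha hab hbc cab cac cbc hx hy hcan).2 hle)
    push_neg at hnot
    obtain ⟨k, hk⟩ := (Nat.modEq_iff_dvd' hnot.le).1 hcan
    have hkc : a*b*k = k*(a*b) := mul_comm _ _
    have hk0 : 1 ≤ k := by
      rcases Nat.eq_zero_or_pos k with rfl | h
      · omega
      · exact h
    refine ⟨⟨x, y, k⟩, mem_GF.2 ⟨hx, hy, hk0, ?_⟩, ?_⟩
    · rw [Nat.le_div_iff_mul_le hw]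
      show k*(a*b) ≤ x*(b*c) + y*(a*c)
      omega
    · show x*(b*c) + y*(a*c) - k*(a*b) = n
      omega
  · rintro ⟨⟨x, y, k⟩, hmem, rfl⟩
    obtain ⟨hx, hy, hk1, hk2⟩ := mem_GF.1 hmem
    simp only at hx hy hk1 hk2
    have hkw : k*(a*b) ≤ x*(b*c) + y*(a*c) := (Nat.le_div_iff_mul_le hw).1 hk2
    show ¬ ∃ X Y Z, X*(b*c) + Y*(a*c) + Z*(a*b) = x*(b*c) + y*(a*c) - k*(a*b)
    intro hmemS
    have hcan : (x*(b*c) + y*(a*c) - k*(a*b)) ≡ x*(b*c) + y*(a*c) [MOD a*b] := by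
      have h0 := modeq_add_mul (x*(b*c) + y*(a*c) - k*(a*b)) k (a*b)
      have he : x*(b*c) + y*(a*c) - k*(a*b) + k*(a*b) = x*(b*c) + y*(a*c) := by omega
      rwa [he] at h0
    have hle := (mem_iff_canonical ha hab hbc cab cac cbc hx hy hcan).1 hmemS
    have hpos : 0 < k*(a*b) := Nat.mul_pos (by omega) hw
    omega

include ha hab hbc cab cac cbc in
lemma genus_card :
    ({m : ℕ | ∃ X Y Z, X*(b*c) + Y*(a*c) + Z*(a*b) = m}ᶜ).ncard
      = ∑ x ∈ range a, ∑ y ∈ range b, (x*(b*c) + y*(a*c))/(a*b) := by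
  have hw : 0 < a*b := Nat.mul_pos (by omega) (by omega)
  rw [compl_eq ha hab hbc cab cac cbc, Set.ncard_image_of_injOn ?inj,
    Set.ncard_coe_finset, card_GF]
  case inj =>
    rintro ⟨x, y, k⟩ h1 ⟨x', y', k'⟩ h2 heq
    rw [Finset.mem_coe] at h1 h2
    obtain ⟨hx, hy, hk1, hk2⟩ := mem_GF.1 h1
    obtain ⟨hx', hy', hk1', hk2'⟩ := mem_GF.1 h2
    simp only at hx hy hk1 hk2 hx' hy' hk1' hk2' heq
    have hkw : k*(a*b) ≤ x*(b*c) + y*(a*c) := (Nat.le_div_iff_mul_le hw).1 hk2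
    have hkw' : k'*(a*b) ≤ x'*(b*c) + y'*(a*c) := (Nat.le_div_iff_mul_le hw).1 hk2'
    have hcan : (x*(b*c) + y*(a*c) - k*(a*b)) ≡ x*(b*c) + y*(a*c) [MOD a*b] := by
      have h0 := modeq_add_mul (x*(b*c) + y*(a*c) - k*(a*b)) k (a*b)
      have he : x*(b*c) + y*(a*c) - k*(a*b) + k*(a*b) = x*(b*c) + y*(a*c) := by omega
      rwa [he] at h0
    have hcan' : (x'*(b*c) + y'*(a*c) - k'*(a*b)) ≡ x'*(b*c) + y'*(a*c) [MOD a*b] := by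
      have h0 := modeq_add_mul (x'*(b*c) + y'*(a*c) - k'*(a*b)) k' (a*b)
      have he : x'*(b*c) + y'*(a*c) - k'*(a*b) + k'*(a*b) = x'*(b*c) + y'*(a*c) := by omega
      rwa [he] at h0
    rw [heq] at hcan
    obtain ⟨e1, e2⟩ := canonical_unique cab cac cbc hx hy hx' hy' (hcan.symm.trans hcan')
    subst e1; subst e2
    have e3 : k = k' := by
      have h5 : k*(a*b) = k'*(a*b) := by omega
      exact Nat.eq_of_mul_eq_mul_right hw h5
    subst e3
    rfl

include ha hab hbc cab cac cbc in
lemma inter_eq (T : ℕ) :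
    {m : ℕ | ∃ X Y Z, X*(b*c) + Y*(a*c) + Z*(a*b) = m} ∩ Set.Icc 0 T
      = (fun t : ℕ × ℕ × ℕ => t.1*(b*c) + t.2.1*(a*c) + t.2.2*(a*b)) ''
        ↑(EF a b c T) := by
  have hw : 0 < a*b := Nat.mul_pos (by omega) (by omega)
  ext n
  simp only [Set.mem_inter_iff, Set.mem_setOf_eq, Set.mem_Icc, Set.mem_image, Finset.mem_coe]
  constructor
  · rintro ⟨hmemS, -, hnT⟩
    obtain ⟨x, y, hx, hy, hcan⟩ := exists_canonical ha hab cab cac cbc n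
    have hle : x*(b*c) + y*(a*c) ≤ n :=
      (mem_iff_canonical ha hab hbc cab cac cbc hx hy hcan).1 hmemS
    obtain ⟨z, hz⟩ := (Nat.modEq_iff_dvd' hle).1 hcan.symm
    have hzc : a*b*z = z*(a*b) := mul_comm _ _
    have hzb : z ≤ z*(a*b) := Nat.le_mul_of_pos_right z hw
    refine ⟨(x, y, z), mem_EF.2 ⟨hx, hy, ?_, ?_⟩, ?_⟩
    · show z < T + 1
      omega
    · show x*(b*c) + y*(a*c) + z*(a*b) ≤ T
      omega
    · show x*(b*c) + y*(a*c) + z*(a*b) = n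
      omega
  · rintro ⟨⟨x, y, z⟩, hmem, rfl⟩
    obtain ⟨hx, hy, hz, hfT⟩ := mem_EF.1 hmem
    exact ⟨⟨x, y, z, rfl⟩, Nat.zero_le _, hfT⟩

include ha hab hbc cab cac cbc in
lemma card_inter (T : ℕ) :
    ({m : ℕ | ∃ X Y Z, X*(b*c) + Y*(a*c) + Z*(a*b) = m} ∩ Set.Icc 0 T).ncard
      = (EF a b c T).card := by
  rw [inter_eq ha hab hbc cab cac cbc T, Set.ncard_image_of_injOn ?inj,
    Set.ncard_coe_finset]
  case inj =>
    rintro ⟨x, y, z⟩ h1 ⟨x', y', z'⟩ h2 heq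
    rw [Finset.mem_coe] at h1 h2
    obtain ⟨hx, hy, -, -⟩ := mem_EF.1 h1
    obtain ⟨hx', hy', -, -⟩ := mem_EF.1 h2
    simp only at hx hy hx' hy' heq
    obtain ⟨e1, e2, e3⟩ := rep_unique ha hab hbc cab cac cbc hx hy hx' hy' heq
    subst e1; subst e2; subst e3; rfl

end Count
end SS

namespace SS

lemma inter_split (S : Set ℕ) (h0 : 0 ∈ S) (T : ℕ) :
    (S ∩ Set.Icc 0 T).ncard = (S ∩ Set.Icc 1 T).ncard + 1 := by
  have hfin : (S ∩ Set.Icc 1 T).Finite :=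
    Set.Finite.subset (Set.finite_Icc 1 T) Set.inter_subset_right
  have hins : S ∩ Set.Icc 0 T = insert 0 (S ∩ Set.Icc 1 T) := by
    ext n
    simp only [Set.mem_inter_iff, Set.mem_Icc, Set.mem_insert_iff]
    constructor
    · rintro ⟨hn, -, hnT⟩
      rcases Nat.eq_zero_or_pos n with rfl | hp
      · exact Or.inl rfl
      · exact Or.inr ⟨hn, hp, hnT⟩
    · rintro (rfl | ⟨hn, h1, hT⟩)
      · exact ⟨h0, le_refl _, Nat.zero_le _⟩
      · exact ⟨hn, Nat.zero_le _, hT⟩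
  rw [hins, Set.ncard_insert_of_notMem (by simp) hfin]

lemma sandwich_lower {a b c T : ℕ} (ha : 2 ≤ a) (hab : a < b) (hbc : b < c)
    (hT : T < a*(b*c)) :
    (BF T).card ≤ (EF a b c T).card * ((b*c) * ((a*c) * (a*b))) := by
  have hp : 0 < b*c := Nat.mul_pos (by omega) (by omega)
  have hq : 0 < a*c := Nat.mul_pos (by omega) (by omega)
  have hw : 0 < a*b := Nat.mul_pos (by omega) (by omega)
  have hcard := Finset.card_le_card_of_injOn
    (s := BF T)
    (t := (EF a b c T) ×ˢ ((range (b*c)) ×ˢ ((range (a*c)) ×ˢ (range (a*b)))))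
    (fun t => ((t.1/(b*c), t.2.1/(a*c), t.2.2/(a*b)),
               (t.1 % (b*c), t.2.1 % (a*c), t.2.2 % (a*b)))) ?maps ?inj
  · simpa [Finset.card_product] using hcard
  case maps =>
    rintro ⟨u, v, w⟩ hmem
    rw [Finset.mem_coe, mem_BF] at hmem
    simp only at hmem
    rw [Finset.mem_coe, Finset.mem_product]
    constructor
    · rw [mem_EF]
      refine ⟨?_, ?_, ?_, ?_⟩
      · show u/(b*c) < a
        exact (Nat.div_lt_iff_lt_mul hp).2 (by omega)
      · show v/(a*c) < b
        refine (Nat.div_lt_iff_lt_mul hq).2 ?_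
        have : b*(a*c) = a*(b*c) := by ring
        omega
      · show w/(a*b) < T + 1
        have := Nat.div_le_self w (a*b)
        omega
      · show (u/(b*c))*(b*c) + (v/(a*c))*(a*c) + (w/(a*b))*(a*b) ≤ T
        have h1 := Nat.div_mul_le_self u (b*c)
        have h2 := Nat.div_mul_le_self v (a*c)
        have h3 := Nat.div_mul_le_self w (a*b)
        omega
    · simp only [Finset.mem_product, Finset.mem_range]
      exact ⟨Nat.mod_lt _ hp, Nat.mod_lt _ hq, Nat.mod_lt _ hw⟩
  case inj =>
    rintro ⟨u, v, w⟩ h1 ⟨u', v', w'⟩ h2 heq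
    simp only [Prod.mk.injEq] at heq
    obtain ⟨⟨e1, e2, e3⟩, e4, e5, e6⟩ := heq
    have hu : u = u' := by
      rw [← Nat.div_add_mod u (b*c), ← Nat.div_add_mod u' (b*c)]
      rw [mul_comm (b*c) (u/(b*c)), mul_comm (b*c) (u'/(b*c)), e1, e4]
    have hv : v = v' := by
      rw [← Nat.div_add_mod v (a*c), ← Nat.div_add_mod v' (a*c)]
      rw [mul_comm (a*c) (v/(a*c)), mul_comm (a*c) (v'/(a*c)), e2, e5]
    have hww : w = w' := by
      rw [← Nat.div_add_mod w (a*b), ← Nat.div_add_mod w' (a*b)]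
      rw [mul_comm (a*b) (w/(a*b)), mul_comm (a*b) (w'/(a*b)), e3, e6]
    subst hu; subst hv; subst hww; rfl

lemma sandwich_upper {a b c T : ℕ} (ha : 2 ≤ a) (hab : a < b) (hbc : b < c) :
    (EF a b c T).card * ((b*c) * ((a*c) * (a*b)))
      ≤ (BF (T + (b*c + (a*c + a*b)))).card := by
  have hcard := Finset.card_le_card_of_injOn
    (s := (EF a b c T) ×ˢ ((range (b*c)) ×ˢ ((range (a*c)) ×ˢ (range (a*b)))))
    (t := BF (T + (b*c + (a*c + a*b))))
    (fun t => (⟨t.1.1*(b*c) + t.2.1, t.1.2.1*(a*c) + t.2.2.1, t.1.2.2*(a*b) + t.2.2.2⟩ :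
      Σ _ : ℕ, Σ _ : ℕ, ℕ)) ?maps ?inj
  · simpa [Finset.card_product] using hcard
  case maps =>
    rintro ⟨⟨x, y, z⟩, ⟨i, j, k⟩⟩ hmem
    rw [Finset.mem_coe, Finset.mem_product] at hmem
    obtain ⟨hm1, hm2⟩ := hmem
    rw [mem_EF] at hm1
    obtain ⟨hx, hy, hz, hf⟩ := hm1
    simp only at hx hy hz hf
    simp only [Finset.mem_product, Finset.mem_range] at hm2
    obtain ⟨hi, hj, hk⟩ := hm2
    rw [Finset.mem_coe, mem_BF]
    show x*(b*c) + i + (y*(a*c) + j) + (z*(a*b) + k) ≤ T + (b*c + (a*c + a*b))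
    omega
  case inj =>
    rintro ⟨⟨x, y, z⟩, ⟨i, j, k⟩⟩ h1 ⟨⟨x', y', z'⟩, ⟨i', j', k'⟩⟩ h2 heq
    rw [Finset.mem_coe, Finset.mem_product] at h1 h2
    obtain ⟨hm1, hm2⟩ := h1
    obtain ⟨hm1', hm2'⟩ := h2
    simp only [Finset.mem_product, Finset.mem_range] at hm2 hm2'
    obtain ⟨hi, hj, hk⟩ := hm2
    obtain ⟨hi', hj', hk'⟩ := hm2'
    have e1 : x*(b*c) + i = x'*(b*c) + i' := congrArg (fun t => t.1) heq
    have e2 : y*(a*c) + j = y'*(a*c) + j' := congrArg (fun t => t.2.1) heq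
    have e3 : z*(a*b) + k = z'*(a*b) + k' := congrArg (fun t => t.2.2) heq
    obtain ⟨f1, f2⟩ := recover hi hi' e1
    obtain ⟨f3, f4⟩ := recover hj hj' e2
    obtain ⟨f5, f6⟩ := recover hk hk' e3
    subst f1; subst f2; subst f3; subst f4; subst f5; subst f6; rfl

end SS

namespace SS

lemma gauss (n : ℕ) : ∑ i ∈ range n, (i:ℝ) = n*(n-1)/2 := by
  induction n with
  | zero => simp
  | succ n ih => rw [Finset.sum_range_succ, ih]; push_cast; ring

lemma sum_eval {a b c : ℕ} :
    ∑ x ∈ range a, ∑ y ∈ range b, ((x:ℝ)*((b:ℝ)*(c:ℝ)) + (y:ℝ)*((a:ℝ)*(c:ℝ)))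
      = (b:ℝ)*(c:ℝ)*(b:ℝ)*((a:ℝ)*((a:ℝ)-1)/2)
        + (a:ℝ)*((a:ℝ)*(c:ℝ))*((b:ℝ)*((b:ℝ)-1)/2) := by
  have hinner : ∀ x : ℕ, ∑ y ∈ range b, ((x:ℝ)*((b:ℝ)*(c:ℝ)) + (y:ℝ)*((a:ℝ)*(c:ℝ)))
      = (b:ℝ)*((x:ℝ)*((b:ℝ)*(c:ℝ))) + ((b:ℝ)*((b:ℝ)-1)/2)*((a:ℝ)*(c:ℝ)) := by
    intro x
    rw [Finset.sum_add_distrib, Finset.sum_const, ← Finset.sum_mul, gauss]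
    simp [Finset.card_range]
  rw [Finset.sum_congr rfl (fun x _ => hinner x), Finset.sum_add_distrib,
    Finset.sum_const, ← Finset.mul_sum, ← Finset.sum_mul, gauss, Finset.card_range]
  simp only [nsmul_eq_mul]
  ring

lemma genus_real_ub {a b c : ℕ} (ha : 2 ≤ a) (hab : a < b) (hbc : b < c) :
    ((∑ x ∈ range a, ∑ y ∈ range b, (x*(b*c) + y*(a*c))/(a*b) : ℕ) : ℝ)
      ≤ (a:ℝ)*(b:ℝ)*(c:ℝ) - ((a:ℝ)*(c:ℝ) + (b:ℝ)*(c:ℝ))/2 := by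
  have hterm : ∀ x ∈ range a, ∀ y ∈ range b,
      (((x*(b*c) + y*(a*c))/(a*b) : ℕ) : ℝ)
        ≤ ((x:ℝ)*((b:ℝ)*(c:ℝ)) + (y:ℝ)*((a:ℝ)*(c:ℝ)))/((a:ℝ)*(b:ℝ)) := by
    intro x _ y _
    have h := Nat.cast_div_le (α := ℝ) (m := x*(b*c) + y*(a*c)) (n := a*b)
    have he : ((x*(b*c) + y*(a*c) : ℕ):ℝ) = (x:ℝ)*((b:ℝ)*(c:ℝ)) + (y:ℝ)*((a:ℝ)*(c:ℝ)) := by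
      push_cast; ring
    have he2 : ((a*b : ℕ):ℝ) = (a:ℝ)*(b:ℝ) := by push_cast; ring
    rw [he, he2] at h
    exact h
  have hsum : ((∑ x ∈ range a, ∑ y ∈ range b, (x*(b*c) + y*(a*c))/(a*b) : ℕ) : ℝ)
      ≤ ∑ x ∈ range a, ∑ y ∈ range b,
          ((x:ℝ)*((b:ℝ)*(c:ℝ)) + (y:ℝ)*((a:ℝ)*(c:ℝ)))/((a:ℝ)*(b:ℝ)) := by
    push_cast
    refine Finset.sum_le_sum (fun x hx => Finset.sum_le_sum (fun y hy => ?_)) 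
    have := hterm x hx y hy
    push_cast at this ⊢
    exact this
  refine hsum.trans ?_
  have hdiv : ∑ x ∈ range a, ∑ y ∈ range b,
      ((x:ℝ)*((b:ℝ)*(c:ℝ)) + (y:ℝ)*((a:ℝ)*(c:ℝ)))/((a:ℝ)*(b:ℝ))
      = (∑ x ∈ range a, ∑ y ∈ range b,
          ((x:ℝ)*((b:ℝ)*(c:ℝ)) + (y:ℝ)*((a:ℝ)*(c:ℝ))))/((a:ℝ)*(b:ℝ)) := by
    calc ∑ x ∈ range a, ∑ y ∈ range b,
        ((x:ℝ)*((b:ℝ)*(c:ℝ)) + (y:ℝ)*((a:ℝ)*(c:ℝ)))/((a:ℝ)*(b:ℝ))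
        = ∑ x ∈ range a, (∑ y ∈ range b,
            ((x:ℝ)*((b:ℝ)*(c:ℝ)) + (y:ℝ)*((a:ℝ)*(c:ℝ))))/((a:ℝ)*(b:ℝ)) :=
          Finset.sum_congr rfl (fun x _ => (Finset.sum_div _ _ _).symm)
      _ = _ := (Finset.sum_div _ _ _).symm
  rw [hdiv, sum_eval]
  have ha0 : (0:ℝ) < (a:ℝ) := by exact_mod_cast (by omega : 0 < a)
  have hb0 : (0:ℝ) < (b:ℝ) := by exact_mod_cast (by omega : 0 < b)
  rw [div_le_iff₀ (by positivity)]
  ring_nf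
  nlinarith [ha0, hb0, sq_nonneg ((a:ℝ)*(b:ℝ))]

end SS

namespace SS

lemma genus_real_lb {a b c : ℕ} (ha : 2 ≤ a) (hab : a < b) (hbc : b < c) :
    (a:ℝ)*(b:ℝ)*(c:ℝ) - ((a:ℝ)*(c:ℝ) + (b:ℝ)*(c:ℝ))/2 - (a:ℝ)*(b:ℝ)
      ≤ ((∑ x ∈ range a, ∑ y ∈ range b, (x*(b*c) + y*(a*c))/(a*b) : ℕ) : ℝ) := by
  have hw : 0 < a*b := Nat.mul_pos (by omega) (by omega)
  have ha0 : (0:ℝ) < (a:ℝ) := by exact_mod_cast (by omega : 0 < a)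
  have hb0 : (0:ℝ) < (b:ℝ) := by exact_mod_cast (by omega : 0 < b)
  have hterm : ∀ x y : ℕ,
      ((x:ℝ)*((b:ℝ)*(c:ℝ)) + (y:ℝ)*((a:ℝ)*(c:ℝ)))/((a:ℝ)*(b:ℝ)) - 1
        ≤ (((x*(b*c) + y*(a*c))/(a*b) : ℕ) : ℝ) := by
    intro x y
    set v := x*(b*c) + y*(a*c) with hv
    have hlt : v < (v/(a*b) + 1)*(a*b) := (Nat.div_lt_iff_lt_mul hw).1 (Nat.lt_succ_self _)
    have hltR : (v:ℝ) < (((v/(a*b) : ℕ):ℝ) + 1)*((a:ℝ)*(b:ℝ)) := by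
      have := (Nat.cast_lt (α := ℝ)).2 hlt
      push_cast at this
      convert this using 2 <;> push_cast <;> ring
    have hvR : ((v:ℕ):ℝ) = (x:ℝ)*((b:ℝ)*(c:ℝ)) + (y:ℝ)*((a:ℝ)*(c:ℝ)) := by
      rw [hv]; push_cast; ring
    rw [div_sub_one (by positivity), div_le_iff₀ (by positivity)]
    rw [hvR] at hltR
    nlinarith [hltR]
  have hsum : ∑ x ∈ range a, ∑ y ∈ range b,
      (((x:ℝ)*((b:ℝ)*(c:ℝ)) + (y:ℝ)*((a:ℝ)*(c:ℝ)))/((a:ℝ)*(b:ℝ)) - 1)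
      ≤ ((∑ x ∈ range a, ∑ y ∈ range b, (x*(b*c) + y*(a*c))/(a*b) : ℕ) : ℝ) := by
    push_cast
    exact Finset.sum_le_sum (fun x _ => Finset.sum_le_sum (fun y _ => by
      have := hterm x y
      push_cast at this ⊢
      exact this))
  refine le_trans ?_ hsum
  have hexp : ∑ x ∈ range a, ∑ y ∈ range b,
      (((x:ℝ)*((b:ℝ)*(c:ℝ)) + (y:ℝ)*((a:ℝ)*(c:ℝ)))/((a:ℝ)*(b:ℝ)) - 1)
      = (∑ x ∈ range a, ∑ y ∈ range b,
          ((x:ℝ)*((b:ℝ)*(c:ℝ)) + (y:ℝ)*((a:ℝ)*(c:ℝ))))/((a:ℝ)*(b:ℝ))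
        - (a:ℝ)*(b:ℝ) := by
    rw [Finset.sum_congr rfl (fun x (_ : x ∈ range a) => Finset.sum_sub_distrib
      (s := range b)
      (f := fun y => ((x:ℝ)*((b:ℝ)*(c:ℝ)) + (y:ℝ)*((a:ℝ)*(c:ℝ)))/((a:ℝ)*(b:ℝ)))
      (g := fun _ => (1:ℝ))), Finset.sum_sub_distrib]
    simp only [Finset.sum_const, Finset.card_range, nsmul_eq_mul, mul_one]
    have h1 : ∑ x ∈ range a, ∑ y ∈ range b,
        ((x:ℝ)*((b:ℝ)*(c:ℝ)) + (y:ℝ)*((a:ℝ)*(c:ℝ)))/((a:ℝ)*(b:ℝ))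
        = (∑ x ∈ range a, ∑ y ∈ range b,
            ((x:ℝ)*((b:ℝ)*(c:ℝ)) + (y:ℝ)*((a:ℝ)*(c:ℝ))))/((a:ℝ)*(b:ℝ)) := by
      calc ∑ x ∈ range a, ∑ y ∈ range b,
          ((x:ℝ)*((b:ℝ)*(c:ℝ)) + (y:ℝ)*((a:ℝ)*(c:ℝ)))/((a:ℝ)*(b:ℝ))
          = ∑ x ∈ range a, (∑ y ∈ range b,
              ((x:ℝ)*((b:ℝ)*(c:ℝ)) + (y:ℝ)*((a:ℝ)*(c:ℝ))))/((a:ℝ)*(b:ℝ)) :=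
            Finset.sum_congr rfl (fun x _ => (Finset.sum_div _ _ _).symm)
        _ = _ := (Finset.sum_div _ _ _).symm
    rw [h1]
  rw [hexp, sum_eval]
  have heq : (a:ℝ)*(b:ℝ)*(c:ℝ) - ((a:ℝ)*(c:ℝ) + (b:ℝ)*(c:ℝ))/2
      = ((b:ℝ)*(c:ℝ)*(b:ℝ)*((a:ℝ)*((a:ℝ)-1)/2)
          + (a:ℝ)*((a:ℝ)*(c:ℝ))*((b:ℝ)*((b:ℝ)-1)/2))/((a:ℝ)*(b:ℝ)) := by
    field_simp
    ring
  linarith [heq]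

end SS

namespace SS

set_option maxHeartbeats 2000000 in
lemma ratio_bounds_real {α β γ g r C e : ℝ}
    (h5 : 5 ≤ α) (hβ : α + 1 ≤ β) (hγ : β + 1 ≤ γ)
    (hgl : α*β*γ - (α*γ + β*γ)/2 - α*β ≤ g)
    (hgu : g ≤ α*β*γ - (α*γ + β*γ)/2)
    (he : e = β*γ + (α*γ + α*β))
    (hr : r + 1 = C)
    (hC1 : (g+1)*(g+2)*(g+3) ≤ 6*C*(α*β*γ)^2)
    (hC2 : 6*C*(α*β*γ)^2 ≤ (g+e+1)*(g+e+2)*(g+e+3))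
    (hg0 : 0 ≤ g) (hr0 : 0 ≤ r) :
    ((α-2)/α)^3/6 - 1/(α*β*γ) ≤ r/g ∧ r/g ≤ (α+4)^3/(6*α^2*(α-2)) := by
  have hα0 : (0:ℝ) < α := by linarith
  have hβ0 : (0:ℝ) < β := by linarith
  have hγ0 : (0:ℝ) < γ := by linarith
  obtain ⟨A, hA⟩ : ∃ A, A = α*β*γ := ⟨_, rfl⟩
  obtain ⟨D, hD⟩ : ∃ D, D = β*γ := ⟨_, rfl⟩
  rw [← hA] at hgl hgu hC1 hC2 ⊢
  rw [← hD] at hgl hgu he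
  have hD0 : 0 < D := by rw [hD]; positivity
  have hD42 : 42 ≤ D := by rw [hD]; nlinarith
  have hAD : A = α*D := by rw [hA, hD]; ring
  have hA0 : 0 < A := by rw [hAD]; positivity
  have h1 : α*γ ≤ D := by rw [hD]; nlinarith
  have h2 : α*β ≤ D := by rw [hD]; nlinarith
  have hgL : A - 2*D ≤ g := by
    have h3 : (α*γ + D)/2 ≤ D := by nlinarith
    linarith
  have hg2 : 0 < A - 2*D := by
    rw [hAD]; nlinarith
  have hgpos : 0 < g := lt_of_lt_of_le hg2 hgL
  have hgA : g ≤ A := by nlinarith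
  -- lower bound
  have t1 : (A-2*D)^3 ≤ g^3 := pow_le_pow_left₀ hg2.le hgL 3
  have t2 : g^3 ≤ (g+1)*(g+2)*(g+3) := by nlinarith
  have hcube : (A-2*D)^3 ≤ 6*C*A^2 := le_trans (t1.trans t2) hC1
  have hClow : (A-2*D)^3/(6*A^2) ≤ C := by
    rw [div_le_iff₀ (by positivity)]
    linarith
  have hrlow : (A-2*D)^3/(6*A^2) - 1 ≤ r := by linarith
  have lower : ((α-2)/α)^3/6 - 1/A ≤ r/g := by
    have s1 : r/A ≤ r/g := div_le_div_of_nonneg_left hr0 hgpos hgA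
    have s2 : ((A-2*D)^3/(6*A^2) - 1)/A ≤ r/A := (div_le_div_iff_of_pos_right hA0).2 hrlow
    have s3 : ((A-2*D)^3/(6*A^2) - 1)/A = ((α-2)/α)^3/6 - 1/A := by
      rw [hA, hD]
      have hβγ : (β:ℝ)*γ ≠ 0 := by positivity
      field_simp
    linarith
  -- upper bound
  have hhe : g + e + 3 ≤ A + 4*D := by
    have h3 : (3:ℝ) ≤ D := by linarith
    rw [he]
    linarith
  have he0 : 0 ≤ e := by
    rw [he]
    have m1 := mul_nonneg hα0.le hγ0.le
    have m2 := mul_nonneg hα0.le hβ0.le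
    linarith
  have hfac : 0 < A + 4*D := by linarith
  have hprod : (g+e+1)*(g+e+2)*(g+e+3) ≤ (A+4*D)^3 := by
    have q1 : 0 ≤ g+e+1 := by linarith
    have q2 : 0 ≤ g+e+2 := by linarith
    have q3 : g+e+1 ≤ A+4*D := by linarith
    have q4 : g+e+2 ≤ A+4*D := by linarith
    have p1 : (g+e+1)*(g+e+2) ≤ (A+4*D)*(A+4*D) := mul_le_mul q3 q4 q2 hfac.le
    have p2 : (g+e+1)*(g+e+2)*(g+e+3) ≤ (A+4*D)*(A+4*D)*(A+4*D) :=
      mul_le_mul p1 hhe (by linarith) (mul_nonneg hfac.le hfac.le)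
    have p3 : (A+4*D)*(A+4*D)*(A+4*D) = (A+4*D)^3 := by ring
    linarith
  have hCup : 6*C*A^2 ≤ (A+4*D)^3 := le_trans hC2 hprod
  have hC0 : 0 ≤ C := by linarith
  have hCup2 : C ≤ (A+4*D)^3/(6*A^2) := by
    rw [le_div_iff₀ (by positivity)]
    linarith
  have upper : r/g ≤ (α+4)^3/(6*α^2*(α-2)) := by
    have s1 : r/g ≤ C/g := (div_le_div_iff_of_pos_right hgpos).2 (by linarith)
    have s2 : C/g ≤ C/(A-2*D) := div_le_div_of_nonneg_left hC0 hg2 hgL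
    have s3 : C/(A-2*D) ≤ ((A+4*D)^3/(6*A^2))/(A-2*D) := (div_le_div_iff_of_pos_right hg2).2 hCup2
    have s4 : ((A+4*D)^3/(6*A^2))/(A-2*D) = (α+4)^3/(6*α^2*(α-2)) := by
      rw [hA, hD]
      have hne1 : (β:ℝ)*γ ≠ 0 := by positivity
      have hne2 : α - 2 ≠ 0 := ne_of_gt (by linarith)
      have hne3 : α*β*γ - 2*(β*γ) ≠ 0 := by
        have heq : α*β*γ - 2*(β*γ) = (α-2)*(β*γ) := by ring
        rw [heq]
        exact mul_ne_zero hne2 hne1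
      field_simp
    linarith
  exact ⟨lower, upper⟩

end SS

namespace SS

set_option maxHeartbeats 2000000 in
lemma per_index {a b c : ℕ} (ha5 : 5 ≤ a) (hab : a < b) (hbc : b < c)
    (cab : Nat.Coprime a b) (cac : Nat.Coprime a c) (cbc : Nat.Coprime b c)
    (S : Set ℕ)
    (hS : S = {m : ℕ | ∃ x y z : ℕ, x*(b*c) + y*(a*c) + z*(a*b) = m}) :
    (((a:ℝ)-2)/(a:ℝ))^3/6 - 1/((a:ℝ)*(b:ℝ)*(c:ℝ)) ≤ (ordNum S : ℝ)/(genus S : ℝ) ∧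
    (ordNum S : ℝ)/(genus S : ℝ) ≤ ((a:ℝ)+4)^3/(6*(a:ℝ)^2*((a:ℝ)-2)) := by
  have ha : 2 ≤ a := by omega
  have hg : genus S = ∑ x ∈ range a, ∑ y ∈ range b, (x*(b*c) + y*(a*c))/(a*b) := by
    rw [genus, hS]
    exact genus_card ha hab hbc cab cac cbc
  have hgu := genus_real_ub (a := a) (b := b) (c := c) ha hab hbc
  have hgl := genus_real_lb (a := a) (b := b) (c := c) ha hab hbc
  rw [← hg] at hgu hgl
  have ha0 : (0:ℝ) < (a:ℝ) := by exact_mod_cast (by omega : 0 < a)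
  have hb0 : (0:ℝ) < (b:ℝ) := by exact_mod_cast (by omega : 0 < b)
  have hc0 : (0:ℝ) < (c:ℝ) := by exact_mod_cast (by omega : 0 < c)
  have hglt : genus S < a*(b*c) := by
    have h2 : (genus S : ℝ) < ((a*(b*c) : ℕ):ℝ) := by
      push_cast
      nlinarith [hgu, mul_pos ha0 hc0, mul_pos hb0 hc0]
    exact_mod_cast h2
  have h0S : 0 ∈ S := by rw [hS]; exact ⟨0, 0, 0, by simp⟩
  have hordsucc : ordNum S + 1 = (EF a b c (genus S)).card := by
    have hsplit := inter_split S h0S (genus S)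
    have hci' : ∀ G : ℕ, (S ∩ Set.Icc 0 G).ncard = (EF a b c G).card := by
      intro G
      rw [hS]
      exact card_inter ha hab hbc cab cac cbc G
    have hci := hci' (genus S)
    rw [ordNum]
    omega
  have n1 := card_BF (genus S)
  have n2 := sandwich_lower ha hab hbc hglt
  have n3 := sandwich_upper (T := genus S) ha hab hbc
  have n4 := card_BF (genus S + (b*c + (a*c + a*b)))
  have hC1 : ((genus S:ℝ)+1)*((genus S:ℝ)+2)*((genus S:ℝ)+3)
      ≤ 6*((EF a b c (genus S)).card:ℝ)*((a:ℝ)*(b:ℝ)*(c:ℝ))^2 := by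
    have hn : (genus S+1)*(genus S+2)*(genus S+3)
        ≤ 6*((EF a b c (genus S)).card * ((b*c) * ((a*c) * (a*b)))) := by
      rw [← n1]
      exact Nat.mul_le_mul_left 6 n2
    have hcast := (Nat.cast_le (α := ℝ)).2 hn
    push_cast at hcast
    nlinarith [hcast]
  have hC2 : 6*((EF a b c (genus S)).card:ℝ)*((a:ℝ)*(b:ℝ)*(c:ℝ))^2
      ≤ ((genus S:ℝ)+((b:ℝ)*(c:ℝ)+((a:ℝ)*(c:ℝ)+(a:ℝ)*(b:ℝ)))+1)
        *((genus S:ℝ)+((b:ℝ)*(c:ℝ)+((a:ℝ)*(c:ℝ)+(a:ℝ)*(b:ℝ)))+2)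
        *((genus S:ℝ)+((b:ℝ)*(c:ℝ)+((a:ℝ)*(c:ℝ)+(a:ℝ)*(b:ℝ)))+3) := by
    have hn : 6*((EF a b c (genus S)).card * ((b*c) * ((a*c) * (a*b))))
        ≤ (genus S + (b*c + (a*c + a*b))+1)*(genus S + (b*c + (a*c + a*b))+2)
          *(genus S + (b*c + (a*c + a*b))+3) := by
      rw [← n4]
      exact Nat.mul_le_mul_left 6 n3
    have hcast := (Nat.cast_le (α := ℝ)).2 hn
    push_cast at hcast
    nlinarith [hcast]
  have h5R : (5:ℝ) ≤ (a:ℝ) := by exact_mod_cast ha5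
  have hβR : (a:ℝ) + 1 ≤ (b:ℝ) := by exact_mod_cast (by omega : a + 1 ≤ b)
  have hγR : (b:ℝ) + 1 ≤ (c:ℝ) := by exact_mod_cast (by omega : b + 1 ≤ c)
  have hrR : (ordNum S : ℝ) + 1 = ((EF a b c (genus S)).card : ℝ) := by
    exact_mod_cast hordsucc
  exact ratio_bounds_real h5R hβR hγR hgl hgu rfl hrR hC1 hC2
    (by positivity) (by positivity)

end SS


open Filter in
theorem stmt_15 (a b c : ℕ → ℕ)
    (ha2 : ∀ i, 2 ≤ a i) (hab : ∀ i, a i < b i) (hbc : ∀ i, b i < c i)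
    (hcopab : ∀ i, Nat.Coprime (a i) (b i))
    (hcopac : ∀ i, Nat.Coprime (a i) (c i))
    (hcopbc : ∀ i, Nat.Coprime (b i) (c i))
    (hmono : StrictMono a)
    (S : ℕ → Set ℕ)
    (hS : ∀ i, S i = {m | ∃ x y z : ℕ,
      x * (b i * c i) + y * (a i * c i) + z * (a i * b i) = m}) :
    Filter.Tendsto (fun i => (ordNum (S i) : ℝ) / (genus (S i) : ℝ))
      Filter.atTop (nhds (1 / 6)) := by
  have hα : Tendsto (fun i => (a i : ℝ)) atTop atTop := by
    refine tendsto_atTop_mono (f := fun i : ℕ => (i : ℝ)) (fun i => ?_)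
      tendsto_natCast_atTop_atTop
    show (i : ℝ) ≤ (a i : ℝ)
    exact_mod_cast hmono.le_apply
  have hbc1 : ∀ i, (1:ℝ) ≤ (b i : ℝ) * (c i : ℝ) := by
    intro i
    have h1 : (1:ℝ) ≤ (b i : ℝ) := by exact_mod_cast (by have := hab i; have := ha2 i; omega : 1 ≤ b i)
    have h2 : (1:ℝ) ≤ (c i : ℝ) := by exact_mod_cast (by have := hab i; have := ha2 i; have := hbc i; omega : 1 ≤ c i)
    nlinarith
  have hA : Tendsto (fun i => (a i : ℝ) * (b i : ℝ) * (c i : ℝ)) atTop atTop := by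
    refine tendsto_atTop_mono (fun i => ?_) hα
    have h0 : (0:ℝ) ≤ (a i : ℝ) := by positivity
    nlinarith [hbc1 i]
  have h2a : Tendsto (fun i => 2/(a i:ℝ)) atTop (nhds 0) :=
    Filter.Tendsto.div_atTop tendsto_const_nhds hα
  have h4a : Tendsto (fun i => 4/(a i:ℝ)) atTop (nhds 0) :=
    Filter.Tendsto.div_atTop tendsto_const_nhds hα
  have h1A : Tendsto (fun i => 1/((a i:ℝ) * (b i:ℝ) * (c i:ℝ))) atTop (nhds 0) :=
    Filter.Tendsto.div_atTop tendsto_const_nhds hA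
  have hev5 : ∀ᶠ i in atTop, (5:ℝ) ≤ (a i : ℝ) := hα.eventually_ge_atTop 5
  -- limit of lower bound
  have hlow : Tendsto (fun i => (((a i:ℝ)-2)/(a i:ℝ))^3/6 - 1/((a i:ℝ)*(b i:ℝ)*(c i:ℝ)))
      atTop (nhds (1/6)) := by
    have hbase : Tendsto (fun i => ((1:ℝ) - 2/(a i:ℝ))^3/6 - 1/((a i:ℝ)*(b i:ℝ)*(c i:ℝ)))
        atTop (nhds (((1:ℝ) - 0)^3/6 - 0)) := by
      exact Filter.Tendsto.sub
        (Filter.Tendsto.div_const (Filter.Tendsto.pow (Filter.Tendsto.sub tendsto_const_nhds h2a) 3) 6)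
        h1A
    have heq : ∀ᶠ i in atTop,
        ((1:ℝ) - 2/(a i:ℝ))^3/6 - 1/((a i:ℝ)*(b i:ℝ)*(c i:ℝ))
          = (((a i:ℝ)-2)/(a i:ℝ))^3/6 - 1/((a i:ℝ)*(b i:ℝ)*(c i:ℝ)) := by
      filter_upwards [hev5] with i h5
      have hne : (a i:ℝ) ≠ 0 := by linarith
      have : (1:ℝ) - 2/(a i:ℝ) = ((a i:ℝ)-2)/(a i:ℝ) := by field_simp
      rw [this]
    have := hbase.congr' heq
    norm_num at this ⊢
    exact this
  -- limit of upper bound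
  have hup : Tendsto (fun i => ((a i:ℝ)+4)^3/(6*(a i:ℝ)^2*((a i:ℝ)-2)))
      atTop (nhds (1/6)) := by
    have hbase : Tendsto (fun i => ((1:ℝ) + 4/(a i:ℝ))^3/(6*((1:ℝ) - 2/(a i:ℝ))))
        atTop (nhds (((1:ℝ) + 0)^3/(6*((1:ℝ) - 0)))) := by
      refine Filter.Tendsto.div
        (Filter.Tendsto.pow (Filter.Tendsto.add tendsto_const_nhds h4a) 3)
        (Filter.Tendsto.mul tendsto_const_nhds (Filter.Tendsto.sub tendsto_const_nhds h2a))
        (by norm_num)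
    have heq : ∀ᶠ i in atTop,
        ((1:ℝ) + 4/(a i:ℝ))^3/(6*((1:ℝ) - 2/(a i:ℝ)))
          = ((a i:ℝ)+4)^3/(6*(a i:ℝ)^2*((a i:ℝ)-2)) := by
      filter_upwards [hev5] with i h5
      have hne : (a i:ℝ) ≠ 0 := by linarith
      have hne2 : (a i:ℝ) - 2 ≠ 0 := by linarith
      field_simp
    have := hbase.congr' heq
    norm_num at this ⊢
    exact this
  -- squeeze
  have hev5n : ∀ᶠ i in atTop, 5 ≤ a i := by
    rw [Filter.eventually_atTop]
    exact ⟨5, fun i hi => le_trans hi hmono.le_apply⟩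
  refine tendsto_of_tendsto_of_tendsto_of_le_of_le' hlow hup ?_ ?_
  · filter_upwards [hev5n] with i h5
    exact (SS.per_index h5 (hab i) (hbc i) (hcopab i) (hcopac i) (hcopbc i) (S i) (hS i)).1
  · filter_upwards [hev5n] with i h5
    exact (SS.per_index h5 (hab i) (hbc i) (hcopab i) (hcopac i) (hcopbc i) (S i) (hS i)).2
end

section
/- Let 2 ≤ a_1 < a_2 < ⋯ < a_n be pairwise relatively prime integers and let S = ⟨q_1, ..., q_n⟩ be the supersymmetric numerical semigroup corresponding to a_1, ..., a_n. Suppose x ∈ S and (x_1, ..., x_n) is a factorization of x, i.e. x_1 q_1 + ⋯ + x_n q_n = x. Then the number of factorizations of x in S is |Z(x)| = C(n + Σ_{i=1}^n ⌊x_i/a_i⌋ − 1, n − 1), where C denotes the binomial coefficient. -/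
open Finset

lemma cardFinsetSum {α β : Type*} (s : Finset β) (f : β → Multiset α) :
    Multiset.card (∑ i ∈ s, f i) = ∑ i ∈ s, Multiset.card (f i) := by
  classical
  induction s using Finset.induction with
  | empty => simp
  | insert _ _ h ih => simp [Finset.sum_insert h, ih]

lemma starsBars (n m : ℕ) :
    Nat.card {v : Fin n → ℕ | ∑ i, v i = m} = (n + m - 1).choose m := by
  have e : {v : Fin n → ℕ | ∑ i, v i = m} ≃ Sym (Fin n) m :=
  { toFun := fun v => ⟨∑ i, (v.1 i) • ({i} : Multiset (Fin n)), by
      have hv := v.2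
      simp only [Set.mem_setOf_eq] at hv
      rw [cardFinsetSum]
      simp [Multiset.card_nsmul, hv]⟩
    invFun := fun s => ⟨fun i => s.1.count i, by
      simp only [Set.mem_setOf_eq]
      rw [← Finset.sum_subset (Finset.subset_univ s.1.toFinset)
        (fun i _ hi => Multiset.count_eq_zero_of_notMem (by simpa using hi)),
        Multiset.toFinset_sum_count_eq]
      exact s.2⟩
    left_inv := fun v => by
      ext i
      simp [Multiset.count_sum', Multiset.count_nsmul, Multiset.count_singleton]
    right_inv := fun s => Subtype.ext (by
      show ∑ i : Fin n, Multiset.count i s.1 • ({i} : Multiset (Fin n)) = s.1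
      rw [← Finset.sum_subset (Finset.subset_univ s.1.toFinset)
        (fun i _ hi => by
          rw [Multiset.count_eq_zero_of_notMem (by simpa using hi), zero_smul])]
      exact Multiset.toFinset_sum_count_nsmul_eq s.1) }
  rw [Nat.card_congr e, Nat.card_eq_fintype_card, Sym.card_sym_eq_choose]
  simp

theorem stmt_16 (n : ℕ) (hn : 0 < n) (a : Fin n → ℕ)
    (h2 : ∀ i, 2 ≤ a i) (hmono : StrictMono a)
    (hcop : ∀ i j, i ≠ j → Nat.Coprime (a i) (a j))
    (q : Fin n → ℕ) (hq : ∀ i, q i = (∏ j, a j) / a i)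
    (x : ℕ) (xf : Fin n → ℕ) (hxf : ∑ i, xf i * q i = x) :
    {v : Fin n → ℕ | ∑ i, v i * q i = x}.ncard =
      Nat.choose (n + (∑ i, xf i / a i) - 1) (n - 1) := by
  classical
  set P := ∏ j, a j with hPdef
  have hapos : ∀ i, 0 < a i := fun i => lt_of_lt_of_le two_pos (h2 i)
  have hPpos : 0 < P := Finset.prod_pos fun i _ => hapos i
  have hdvd : ∀ i, a i ∣ P := fun i => Finset.dvd_prod_of_mem a (Finset.mem_univ i)
  have hqa : ∀ i, q i * a i = P := fun i => by rw [hq]; exact Nat.div_mul_cancel (hdvd i)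
  have hqprod : ∀ i, q i = ∏ j ∈ Finset.univ.erase i, a j := by
    intro i
    apply Nat.eq_of_mul_eq_mul_left (hapos i)
    rw [Finset.mul_prod_erase Finset.univ a (Finset.mem_univ i), mul_comm, hqa]
  have hcq : ∀ i, Nat.Coprime (q i) (a i) := fun i => by
    rw [hqprod i]
    exact Nat.Coprime.prod_left fun j hj => hcop j i (Finset.ne_of_mem_erase hj)
  have hdvdq : ∀ i j, i ≠ j → a i ∣ q j := by
    intro i j hij
    rw [hq, Nat.dvd_div_iff_mul_dvd (hdvd j)]
    exact Nat.Coprime.mul_dvd_of_dvd_of_dvd (hcop j i hij.symm) (hdvd j) (hdvd i)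
  -- every factorization agrees with xf mod a i
  have hmod : ∀ v : Fin n → ℕ, (∑ i, v i * q i = x) → ∀ i, v i % a i = xf i % a i := by
    intro v hv i
    have hcast : ((∑ j, v j * q j : ℕ) : ZMod (a i)) = ((∑ j, xf j * q j : ℕ) : ZMod (a i)) := by
      rw [hv, hxf]
    push_cast at hcast
    have hz : ∀ j ∈ Finset.univ, j ≠ i → ((v j : ZMod (a i)) * (q j : ZMod (a i)) = 0) :=
      fun j _ hj => by
        rw [(ZMod.natCast_eq_zero_iff _ _).2 (hdvdq i j (Ne.symm hj)), mul_zero]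
    have hz' : ∀ j ∈ Finset.univ, j ≠ i → ((xf j : ZMod (a i)) * (q j : ZMod (a i)) = 0) :=
      fun j _ hj => by
        rw [(ZMod.natCast_eq_zero_iff _ _).2 (hdvdq i j (Ne.symm hj)), mul_zero]
    rw [Finset.sum_eq_single i hz (by simp), Finset.sum_eq_single i hz' (by simp)] at hcast
    have hu : IsUnit ((q i : ZMod (a i))) := (ZMod.unitOfCoprime (q i) (hcq i)).isUnit
    have hvi : (v i : ZMod (a i)) = (xf i : ZMod (a i)) := hu.mul_right_cancel hcast
    exact (ZMod.natCast_eq_natCast_iff' _ _ _).1 hvi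
  have hdecomp : ∀ v : Fin n → ℕ, (∀ i, v i % a i = xf i % a i) →
      ∑ i, v i * q i = P * (∑ i, v i / a i) + ∑ i, (xf i % a i) * q i := by
    intro v hv
    rw [Finset.mul_sum, ← Finset.sum_add_distrib]
    refine Finset.sum_congr rfl fun i _ => ?_
    conv_lhs => rw [← Nat.div_add_mod (v i) (a i)]
    rw [hv i, add_mul]
    congr 1
    rw [← hqa i]; ring
  set m := ∑ i, xf i / a i with hmdef
  have hx : x = P * m + ∑ i, (xf i % a i) * q i := by
    rw [← hxf]; exact hdecomp xf fun i => rfl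
  have hset : {v : Fin n → ℕ | ∑ i, v i * q i = x}
      = (fun k : Fin n → ℕ => fun i => xf i % a i + a i * k i) '' {k | ∑ i, k i = m} := by
    ext v
    simp only [Set.mem_setOf_eq, Set.mem_image]
    constructor
    · intro hv
      refine ⟨fun i => v i / a i, ?_, ?_⟩
      · have hd := hdecomp v (hmod v hv)
        rw [hv, hx] at hd
        exact (Nat.eq_of_mul_eq_mul_left hPpos (Nat.add_right_cancel hd)).symm
      · funext i
        simp only
        rw [← hmod v hv i, Nat.mod_add_div]
    · rintro ⟨k, hk, rfl⟩
      have hmods : ∀ i, (xf i % a i + a i * k i) % a i = xf i % a i := fun i => by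
        simp [Nat.add_mul_mod_self_left]
      rw [hdecomp _ hmods, hx]
      have hdivs : ∀ i, (xf i % a i + a i * k i) / a i = k i := fun i => by
        rw [Nat.add_mul_div_left _ _ (hapos i),
          Nat.div_eq_of_lt (Nat.mod_lt _ (hapos i)), zero_add]
      congr 2
      rw [← hk]
      exact Finset.sum_congr rfl fun i _ => hdivs i
  have hinj : Function.Injective (fun k : Fin n → ℕ => fun i => xf i % a i + a i * k i) := by
    intro k k' h
    funext i
    have hi := congr_fun h i
    simp only at hi
    exact Nat.eq_of_mul_eq_mul_left (hapos i) (Nat.add_left_cancel hi)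
  rw [hset, Set.ncard_image_of_injective _ hinj, ← Nat.card_coe_set_eq, starsBars n m]
  have h1 : n - 1 ≤ n + m - 1 := by omega
  have h2' : n + m - 1 - (n - 1) = m := by omega
  have hsym := Nat.choose_symm h1
  rw [h2'] at hsym
  exact hsym
end

section
/- Let 2 ≤ a_1 < a_2 < ⋯ < a_n be pairwise relatively prime integers and let S = ⟨q_1, ..., q_n⟩ be the supersymmetric numerical semigroup corresponding to a_1, ..., a_n, with genus g = g(S). Then the ordinarization number of S satisfies r(S) = −1 + #{(b_1, ..., b_n) ∈ ℕ^n : b_1 q_1 + ⋯ + b_n q_n ≤ g and b_i ≤ a_i − 1 for every i ∈ {2, ..., n}}. -/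
theorem stmt_17 (n : ℕ) (hn : 0 < n) (a : Fin n → ℕ)
    (h2 : ∀ i, 2 ≤ a i) (hmono : StrictMono a)
    (hcop : ∀ i j, i ≠ j → Nat.Coprime (a i) (a j))
    (q : Fin n → ℕ) (hq : ∀ i, q i = (∏ j, a j) / a i)
    (S : Set ℕ) (hS : S = {m | ∃ v : Fin n → ℕ, ∑ i, v i * q i = m}) :
    ordNum S + 1 =
      {v : Fin n → ℕ | (∑ i, v i * q i ≤ genus S) ∧
        ∀ i : Fin n, i ≠ ⟨0, hn⟩ → v i ≤ a i - 1}.ncard := by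
  set z : Fin n := ⟨0, hn⟩ with hz
  set P : ℕ := ∏ j, a j with hP
  have hapos : ∀ i, 0 < a i := fun i => lt_of_lt_of_le two_pos (h2 i)
  have hPpos : 0 < P := Finset.prod_pos (fun i _ => hapos i)
  have hqprod : ∀ i, q i = ∏ j ∈ Finset.univ.erase i, a j := by
    intro i
    rw [hq i, hP, ← Finset.mul_prod_erase Finset.univ a (Finset.mem_univ i),
      Nat.mul_div_cancel_left _ (hapos i)]
  have hqa : ∀ i, q i * a i = P := by
    intro i
    rw [hqprod i, hP, ← Finset.mul_prod_erase Finset.univ a (Finset.mem_univ i)]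
    ring
  have hqpos : ∀ i, 0 < q i := by
    intro i
    rcases Nat.eq_zero_or_pos (q i) with h | h
    · exfalso; have := hqa i; rw [h] at this; simp at this; omega
    · exact h
  have hdvd : ∀ i j, i ≠ j → a i ∣ q j := by
    intro i j hij
    rw [hqprod j]
    exact Finset.dvd_prod_of_mem a (Finset.mem_erase.mpr ⟨hij, Finset.mem_univ i⟩)
  have hcopq : ∀ i, Nat.Coprime (q i) (a i) := by
    intro i
    rw [hqprod i]
    exact Nat.Coprime.prod_left (fun j hj => hcop j i (Finset.mem_erase.mp hj).1)
  -- injectivity of the representation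
  have hinj : ∀ v w : Fin n → ℕ, (∀ i, i ≠ z → v i < a i) → (∀ i, i ≠ z → w i < a i) →
      ∑ i, v i * q i = ∑ i, w i * q i → v = w := by
    intro v w hv hw hsum
    have key : ∀ i, i ≠ z → v i = w i := by
      intro i hi
      haveI : NeZero (a i) := ⟨(hapos i).ne'⟩
      have hc : ((∑ j, v j * q j : ℕ) : ZMod (a i)) = ((∑ j, w j * q j : ℕ) : ZMod (a i)) := by
        rw [hsum]
      push_cast at hc
      have hz0 : ∀ j, j ≠ i → ((q j : ℕ) : ZMod (a i)) = 0 := by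
        intro j hj
        exact (ZMod.natCast_eq_zero_iff _ _).mpr (hdvd i j (Ne.symm hj))
      rw [Finset.sum_eq_single i (fun j _ hj => by rw [hz0 j hj, mul_zero])
          (fun h => absurd (Finset.mem_univ i) h),
        Finset.sum_eq_single i (fun j _ hj => by rw [hz0 j hj, mul_zero])
          (fun h => absurd (Finset.mem_univ i) h)] at hc
      have hu : IsUnit ((q i : ℕ) : ZMod (a i)) :=
        (ZMod.isUnit_iff_coprime (q i) (a i)).mpr (hcopq i)
      have hvw : ((v i : ℕ) : ZMod (a i)) = ((w i : ℕ) : ZMod (a i)) :=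
        hu.mul_left_cancel (by rw [mul_comm]; rw [hc]; rw [mul_comm])
      calc v i = ((v i : ℕ) : ZMod (a i)).val := (ZMod.val_cast_of_lt (hv i hi)).symm
        _ = ((w i : ℕ) : ZMod (a i)).val := by rw [hvw]
        _ = w i := ZMod.val_cast_of_lt (hw i hi)
    have hzz : v z = w z := by
      rw [← Finset.add_sum_erase _ _ (Finset.mem_univ z),
        ← Finset.add_sum_erase _ (fun i => w i * q i) (Finset.mem_univ z)] at hsum
      have hrest : ∑ i ∈ Finset.univ.erase z, v i * q i
          = ∑ i ∈ Finset.univ.erase z, w i * q i :=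
        Finset.sum_congr rfl fun i hi => by rw [key i (Finset.mem_erase.mp hi).1]
      rw [hrest] at hsum
      have := Nat.add_right_cancel hsum
      exact Nat.eq_of_mul_eq_mul_right (hqpos z) this
    funext i
    by_cases h : i = z
    · rw [h]; exact hzz
    · exact key i h
  -- reduction to normal form
  have hred : ∀ v : Fin n → ℕ, ∃ w : Fin n → ℕ, (∀ i, i ≠ z → w i < a i) ∧
      ∑ i, w i * q i = ∑ i, v i * q i := by
    intro v
    refine ⟨fun j => if j = z then v z + (∑ i ∈ Finset.univ.erase z, v i / a i) * a z
      else v j % a j, ?_, ?_⟩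
    · intro i hi; simp only [if_neg hi]; exact Nat.mod_lt _ (hapos i)
    · rw [← Finset.add_sum_erase _ _ (Finset.mem_univ z),
        ← Finset.add_sum_erase _ (fun i => v i * q i) (Finset.mem_univ z)]
      simp only [if_pos rfl]
      have hifs : ∑ i ∈ Finset.univ.erase z,
          (if i = z then v z + (∑ i ∈ Finset.univ.erase z, v i / a i) * a z
            else v i % a i) * q i
          = ∑ i ∈ Finset.univ.erase z, (v i % a i) * q i :=
        Finset.sum_congr rfl fun i hi => by rw [if_neg (Finset.mem_erase.mp hi).1]
      rw [hifs]
      have step : ∀ i, v i * q i = (v i / a i) * P + (v i % a i) * q i := by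
        intro i
        conv_lhs => rw [← Nat.div_add_mod (v i) (a i)]
        rw [← hqa i]; ring
      have hRHS : ∑ i ∈ Finset.univ.erase z, v i * q i
          = (∑ i ∈ Finset.univ.erase z, v i / a i) * P
            + ∑ i ∈ Finset.univ.erase z, (v i % a i) * q i := by
        rw [Finset.sum_mul, ← Finset.sum_add_distrib]
        exact Finset.sum_congr rfl fun i _ => step i
      rw [hRHS, ← hqa z]
      simp only [eq_self_iff_true, if_true]
      ring
  set g := genus S with hg
  set T := {v : Fin n → ℕ | (∑ i, v i * q i ≤ g) ∧ ∀ i : Fin n, i ≠ z → v i ≤ a i - 1}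
    with hT
  have hTlt : ∀ v ∈ T, ∀ i, i ≠ z → v i < a i := by
    intro v hv i hi
    have h1 := hv.2 i hi
    have := h2 i
    omega
  have himg : (fun v : Fin n → ℕ => ∑ i, v i * q i) '' T = S ∩ Set.Icc 0 g := by
    ext m
    constructor
    · rintro ⟨v, hv, rfl⟩
      exact ⟨hS ▸ ⟨v, rfl⟩, Nat.zero_le _, hv.1⟩
    · rintro ⟨hmS, _, hmg⟩
      rw [hS] at hmS
      obtain ⟨v, hv⟩ := hmS
      obtain ⟨w, hw1, hw2⟩ := hred v
      refine ⟨w, ⟨by rw [hw2, hv]; exact hmg, fun i hi => ?_⟩, hw2.trans hv⟩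
      have := hw1 i hi
      omega
  have hinjOn : Set.InjOn (fun v : Fin n → ℕ => ∑ i, v i * q i) T :=
    fun v hv w hw h => hinj v w (hTlt v hv) (hTlt w hw) h
  have hcard : T.ncard = (S ∩ Set.Icc 0 g).ncard := by
    rw [← himg, Set.ncard_image_of_injOn hinjOn]
  have h0S : 0 ∈ S := by
    rw [hS]; exact ⟨0, by simp⟩
  have hsplit : S ∩ Set.Icc 0 g = insert 0 (S ∩ Set.Icc 1 g) := by
    ext m
    simp only [Set.mem_inter_iff, Set.mem_Icc, Set.mem_insert_iff]
    constructor
    · rintro ⟨hm, _, hmg⟩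
      rcases Nat.eq_zero_or_pos m with rfl | hpos
      · exact Or.inl rfl
      · exact Or.inr ⟨hm, hpos, hmg⟩
    · rintro (rfl | ⟨hm, h1, hmg⟩)
      · exact ⟨h0S, le_refl 0, Nat.zero_le g⟩
      · exact ⟨hm, Nat.zero_le m, hmg⟩
  have hfin : (S ∩ Set.Icc 1 g).Finite :=
    (Set.finite_Icc 1 g).subset Set.inter_subset_right
  have h0nm : (0 : ℕ) ∉ S ∩ Set.Icc 1 g := by
    rintro ⟨_, h1, _⟩; omega
  have : (S ∩ Set.Icc 0 g).ncard = (S ∩ Set.Icc 1 g).ncard + 1 := by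
    rw [hsplit, Set.ncard_insert_of_notMem h0nm hfin]
  show ordNum S + 1 = T.ncard
  rw [hcard, this]
  rfl
end

section
/- Let a and x be positive integers with x ≤ a − 1, let S = ⟨a, a+1, ..., a+x⟩ be the numerical semigroup generated by the interval {a, a+1, ..., a+x}, and write n = ⌈(a−1)/x⌉. Then (1) the Frobenius number of S is F(S) = (n−1)a + (a−1), and (2) the genus of S is g(S) = na − (n(n−1)/2)x − n. -/
noncomputable def frob (S : Set ℕ) : ℕ := sSup Sᶜ

private lemma lt_div_succ_mul (m a : ℕ) (ha : 0 < a) : m < (m / a + 1) * a := by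
  have h1 := Nat.div_add_mod m a
  have h2 := Nat.mod_lt m ha
  calc m = a * (m / a) + m % a := h1.symm
    _ < a * (m / a) + a := Nat.add_lt_add_left h2 _
    _ = (m / a + 1) * a := by ring

private lemma mem_S_iff (a x : ℕ) (hx : 0 < x) (m : ℕ) :
    (∃ cc : Fin (x + 1) → ℕ, ∑ i, cc i * (a + (i : ℕ)) = m) ↔
      ∃ k, k * a ≤ m ∧ m ≤ k * a + k * x := by
  constructor
  · rintro ⟨cc, rfl⟩
    refine ⟨∑ i, cc i, ?_, ?_⟩
    · rw [Finset.sum_mul]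
      exact Finset.sum_le_sum fun i _ => Nat.mul_le_mul le_rfl (Nat.le_add_right _ _)
    · calc ∑ i, cc i * (a + (i : ℕ)) ≤ ∑ i, cc i * (a + x) :=
            Finset.sum_le_sum fun i _ =>
              Nat.mul_le_mul le_rfl (Nat.add_le_add_left (Nat.lt_succ_iff.mp i.isLt) a)
        _ = (∑ i, cc i) * a + (∑ i, cc i) * x := by rw [← Finset.sum_mul, Nat.mul_add]
  · rintro ⟨k, h1, h2⟩
    obtain ⟨r, hr⟩ : ∃ r, m = k * a + r := ⟨m - k * a, by omega⟩
    have hrk : r ≤ k * x := by omega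
    obtain ⟨q, s, hs, hqs⟩ : ∃ q s, s < x ∧ r = x * q + s :=
      ⟨r / x, r % x, Nat.mod_lt _ hx, (Nat.div_add_mod r x).symm⟩
    have hqk : q ≤ k := by
      have h4 : x * q ≤ x * k := by
        have : x * q ≤ r := hqs ▸ Nat.le_add_right _ _
        calc x * q ≤ r := this
          _ ≤ k * x := hrk
          _ = x * k := mul_comm k x
      exact Nat.le_of_mul_le_mul_left h4 hx
    set t : ℕ := if s = 0 then 0 else 1 with ht
    have hqtk : q + t ≤ k := by
      by_cases h : s = 0
      · simp [ht, h, hqk]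
      · have h5 : x * q < x * k := by
          have hs1 : 1 ≤ s := Nat.one_le_iff_ne_zero.mpr h
          have := hrk
          have hkx : k * x = x * k := mul_comm k x
          linarith [hqs.le, hqs.ge]
        have := Nat.lt_of_mul_lt_mul_left h5
        simp [ht, h]
        omega
    obtain ⟨z, hz⟩ : ∃ z, k = q + t + z := ⟨k - (q + t), by omega⟩
    refine ⟨fun i => (if i = (⟨x, by omega⟩ : Fin (x + 1)) then q else 0) +
        (if i = (⟨s, by omega⟩ : Fin (x + 1)) then t else 0) +
        (if i = (⟨0, by omega⟩ : Fin (x + 1)) then z else 0), ?_⟩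
    have hsum : ∑ i : Fin (x + 1), ((if i = (⟨x, by omega⟩ : Fin (x + 1)) then q else 0) +
        (if i = (⟨s, by omega⟩ : Fin (x + 1)) then t else 0) +
        (if i = (⟨0, by omega⟩ : Fin (x + 1)) then z else 0)) * (a + (i : ℕ))
        = q * (a + x) + t * (a + s) + z * (a + 0) := by
      simp only [add_mul, Finset.sum_add_distrib, ite_mul, zero_mul,
        Finset.sum_ite_eq', Finset.mem_univ, if_true]
    rw [hsum, hr, hqs, hz]
    by_cases h : s = 0
    · simp only [ht, if_pos h, h]; ring
    · simp only [ht, if_neg h]; ring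
theorem stmt_18 (a x : ℕ) (ha : 0 < a) (hx : 0 < x) (hxa : x ≤ a - 1)
    (S : Set ℕ)
    (hS : S = {m | ∃ cc : Fin (x + 1) → ℕ, ∑ i, cc i * (a + (i : ℕ)) = m})
    (n : ℕ) (hn : n = (a - 1 + x - 1) / x) :
    frob S = (n - 1) * a + (a - 1) ∧
      (genus S : ℚ) = (n : ℚ) * a - (n : ℚ) * ((n : ℚ) - 1) / 2 * x - n := by
  have ha2 : 2 ≤ a := by omega
  obtain ⟨A, rfl⟩ : ∃ A, a = A + 2 := ⟨a - 2, by omega⟩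
  have hn1 : 1 ≤ n := by
    rw [hn, Nat.one_le_div_iff hx]; omega
  obtain ⟨N, rfl⟩ : ∃ N, n = N + 1 := ⟨n - 1, by omega⟩
  have hnum : A + 2 - 1 + x - 1 = A + x := by omega
  rw [hnum] at hn
  -- key div facts
  have hnx2 : (N + 1) * x ≤ A + x := by
    have h := Nat.div_mul_le_self (A + x) x
    rw [← hn] at h; exact h
  have hnx1 : A + 2 ≤ (N + 1) * x + 1 := by
    have h := lt_div_succ_mul (A + x) x hx
    rw [← hn] at h
    have he : (N + 1 + 1) * x = (N + 1) * x + x := by ring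
    rw [he] at h
    generalize (N + 1) * x = w at h ⊢
    omega
  -- membership characterization
  have hmem : ∀ m : ℕ, m ∈ S ↔ ∃ k, k * (A + 2) ≤ m ∧ m ≤ k * (A + 2) + k * x := by
    intro m; rw [hS]; exact mem_S_iff (A + 2) x hx m
  -- gap characterization
  have hnotmem : ∀ m : ℕ, m ∉ S ↔
      ∃ k, k < N + 1 ∧ k * (A + 2) + k * x < m ∧ m < (k + 1) * (A + 2) := by
    intro m
    rw [hmem m]
    constructor
    · intro h
      push_neg at h
      have hd1 : m / (A + 2) * (A + 2) ≤ m := Nat.div_mul_le_self m (A + 2)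
      have hd2 : m < (m / (A + 2) + 1) * (A + 2) := lt_div_succ_mul m (A + 2) (by omega)
      have hgap := h (m / (A + 2)) hd1
      have hlt : m / (A + 2) < N + 1 := by
        by_contra hc
        push_neg at hc
        have h5 : (N + 1) * x ≤ m / (A + 2) * x := Nat.mul_le_mul hc le_rfl
        linarith
      exact ⟨m / (A + 2), hlt, hgap, hd2⟩
    · rintro ⟨k, hkn, hk1, hk2⟩ ⟨k', h1', h2'⟩
      have hk'k : k' ≤ k := by
        by_contra hc
        push_neg at hc
        have : (k + 1) * (A + 2) ≤ k' * (A + 2) := Nat.mul_le_mul hc le_rfl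
        linarith
      have e1 : k' * (A + 2) ≤ k * (A + 2) := Nat.mul_le_mul hk'k le_rfl
      have e2 : k' * x ≤ k * x := Nat.mul_le_mul hk'k le_rfl
      linarith
  -- term bound
  have hterm : ∀ k, k < N + 1 → k * x + 2 ≤ A + 2 := by
    intro k hk
    have e1 : (k + 1) * x ≤ (N + 1) * x := Nat.mul_le_mul hk le_rfl
    have e2 : (k + 1) * x = k * x + x := by ring
    linarith
  -- complement as a finset
  have hcompl : Sᶜ = ↑((Finset.range (N + 1)).biUnion fun k =>
      Finset.Ioo (k * (A + 2) + k * x) ((k + 1) * (A + 2))) := by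
    ext m
    simp only [Set.mem_compl_iff, Finset.coe_biUnion, Finset.coe_Ioo, Set.mem_iUnion,
      Finset.mem_coe, Finset.mem_range, Set.mem_Ioo, hnotmem m]
    constructor
    · rintro ⟨k, h1, h2, h3⟩; exact ⟨k, h1, h2, h3⟩
    · rintro ⟨k, h1, h2, h3⟩; exact ⟨k, h1, h2, h3⟩
  -- frobenius
  have hmax : IsGreatest Sᶜ (N * (A + 2) + (A + 1)) := by
    constructor
    · rw [Set.mem_compl_iff, hnotmem]
      refine ⟨N, Nat.lt_succ_self N, ?_, ?_⟩
      · have : (N + 1) * x = N * x + x := by ring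
        linarith
      · linarith [(by ring : (N + 1) * (A + 2) = N * (A + 2) + A + 2)]
    · rintro m hm
      rw [Set.mem_compl_iff, hnotmem] at hm
      obtain ⟨k, hk, _, h3⟩ := hm
      have h4 : (k + 1) * (A + 2) ≤ (N + 1) * (A + 2) := Nat.mul_le_mul hk le_rfl
      have h5 : (N + 1) * (A + 2) = N * (A + 2) + A + 2 := by ring
      linarith
  have hfrob : frob S = N * (A + 2) + (A + 1) := by
    simp only [frob]
    exact hmax.csSup_eq
  constructor
  · rw [hfrob]
    norm_num
  -- genus
  have hdisj : ∀ k1 ∈ Finset.range (N + 1), ∀ k2 ∈ Finset.range (N + 1), k1 ≠ k2 →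
      Disjoint (Finset.Ioo (k1 * (A + 2) + k1 * x) ((k1 + 1) * (A + 2)))
        (Finset.Ioo (k2 * (A + 2) + k2 * x) ((k2 + 1) * (A + 2))) := by
    have key : ∀ k1 k2 : ℕ, k1 < k2 →
        Disjoint (Finset.Ioo (k1 * (A + 2) + k1 * x) ((k1 + 1) * (A + 2)))
          (Finset.Ioo (k2 * (A + 2) + k2 * x) ((k2 + 1) * (A + 2))) := by
      intro k1 k2 hlt
      rw [Finset.disjoint_left]
      intro m hm1 hm2
      simp only [Finset.mem_Ioo] at hm1 hm2
      have h1 : (k1 + 1) * (A + 2) ≤ k2 * (A + 2) := Nat.mul_le_mul hlt le_rfl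
      linarith [hm1.2, hm2.1, Nat.zero_le (k2 * x)]
    intro k1 _ k2 _ hne
    rcases lt_or_gt_of_ne hne with h | h
    · exact key _ _ h
    · exact (key _ _ h).symm
  have hcard : (genus S : ℚ) = ∑ k ∈ Finset.range (N + 1), ((A : ℚ) + 1 - k * x) := by
    have h0 : genus S = ∑ k ∈ Finset.range (N + 1),
        ((k + 1) * (A + 2) - (k * (A + 2) + k * x) - 1) := by
      simp only [genus]
      rw [hcompl, Set.ncard_coe_finset, Finset.card_biUnion hdisj]
      simp [Nat.card_Ioo]
    rw [h0, Nat.cast_sum]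
    refine Finset.sum_congr rfl fun k hk => ?_
    have h2 := hterm k (Finset.mem_range.mp hk)
    obtain ⟨c, hc⟩ : ∃ c, A + 2 = k * x + 2 + c := ⟨A + 2 - (k * x + 2), (Nat.add_sub_cancel' h2).symm⟩
    have hsplit : (k + 1) * (A + 2) - (k * (A + 2) + k * x) - 1 = c + 1 := by
      have h3 : (k + 1) * (A + 2) = (k * (A + 2) + k * x) + (c + 2) := by
        rw [hc]; ring
      rw [h3]
      generalize k * (A + 2) + k * x = w
      omega
    rw [hsplit]
    have hcq : (A : ℚ) + 2 = k * x + 2 + c := by exact_mod_cast congrArg (Nat.cast : ℕ → ℚ) hc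
    push_cast
    linarith
  rw [hcard]
  have hgauss : ∑ k ∈ Finset.range (N + 1), (k : ℚ) = (N + 1) * N / 2 := by
    have h := Finset.sum_range_id_mul_two (N + 1)
    have h2 : ((∑ i ∈ Finset.range (N + 1), i : ℕ) : ℚ) * 2 = ((N + 1) * N : ℕ) := by
      exact_mod_cast congrArg (Nat.cast : ℕ → ℚ) h
    push_cast at h2
    linarith
  have hsum : ∑ k ∈ Finset.range (N + 1), ((A : ℚ) + 1 - k * x)
      = (N + 1) * ((A : ℚ) + 1) - (∑ k ∈ Finset.range (N + 1), (k : ℚ)) * x := by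
    rw [Finset.sum_sub_distrib, Finset.sum_const, Finset.card_range, ← Finset.sum_mul]
    simp only [nsmul_eq_mul]
    push_cast
    ring
  rw [hsum, hgauss]
  push_cast
  ring
end

section
/- Let a and x be positive integers with x < a − 1, let S = ⟨a, a+1, ..., a+x⟩ be the numerical semigroup generated by the interval {a, a+1, ..., a+x}, and write n = ⌈(a−1)/x⌉. Then the ordinarization number of S is r(S) = ((n²−1)/8)x + (n−1)/2 if n is odd, and r(S) = (−n(3n−2)/8)x + (n/2)(a−1) if n is even. -/
lemma aux_memS (a x : ℕ) (hx : 0 < x) (m : ℕ) :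
    (∃ cc : Fin (x + 1) → ℕ, ∑ i, cc i * (a + (i : ℕ)) = m) ↔
    ∃ k, k * a ≤ m ∧ m ≤ k * (a + x) := by
  constructor
  · rintro ⟨cc, rfl⟩
    refine ⟨∑ i, cc i, ?_, ?_⟩
    · rw [Finset.sum_mul]
      exact Finset.sum_le_sum fun i _ => Nat.mul_le_mul_left _ (Nat.le_add_right a i)
    · rw [Finset.sum_mul]
      exact Finset.sum_le_sum fun i _ => Nat.mul_le_mul_left _ (by have := i.isLt; omega)
  · rintro ⟨k, h1, h2⟩
    have hkk : k * (a + x) = k * a + k * x := by ring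
    set r := m - k * a with hr
    have hrkx : r ≤ k * x := by omega
    have hm : m = k * a + r := by omega
    set q := r / x with hq
    set s := r % x with hs
    have hsx : s < x := Nat.mod_lt _ hx
    have hqs : r = x * q + s := (Nat.div_add_mod r x).symm
    have hqk : q ≤ k := by
      have h3 : r / x ≤ (k * x) / x := Nat.div_le_div_right hrkx
      rwa [Nat.mul_div_cancel k hx] at h3
    by_cases hs0 : s = 0
    · refine ⟨fun i => (if i = (⟨x, by omega⟩ : Fin (x+1)) then q else 0)
               + (if i = (⟨0, by omega⟩ : Fin (x+1)) then k - q else 0), ?_⟩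
      simp only [add_mul, Finset.sum_add_distrib, ite_mul, zero_mul,
        Finset.sum_ite_eq', Finset.mem_univ, if_true, Fin.val_mk]
      have e2 : (k - q) * (a + 0) = k * a - q * a := by
        rw [Nat.sub_mul]; ring_nf
      have e3 : q * a ≤ k * a := Nat.mul_le_mul_right a hqk
      have e1 : q * (a + x) = q * a + x * q := by ring
      omega
    · have hqlt : q < k := by
        have hcm : k * x = x * k := Nat.mul_comm k x
        have h4 : x * q < x * k := by omega
        exact Nat.lt_of_mul_lt_mul_left h4
      refine ⟨fun i => (if i = (⟨x, by omega⟩ : Fin (x+1)) then q else 0)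
               + (if i = (⟨s, by omega⟩ : Fin (x+1)) then 1 else 0)
               + (if i = (⟨0, by omega⟩ : Fin (x+1)) then k - q - 1 else 0), ?_⟩
      simp only [add_mul, Finset.sum_add_distrib, ite_mul, zero_mul,
        Finset.sum_ite_eq', Finset.mem_univ, if_true, Fin.val_mk]
      have e1 : q * (a + x) = q * a + x * q := by ring
      have e2 : (k - q - 1) * (a + 0) = k * a - q * a - a := by
        rw [Nat.sub_mul, Nat.sub_mul, one_mul]; ring_nf
      have e3 : (q + 1) * a ≤ k * a := Nat.mul_le_mul_right a hqlt
      have e4 : (q + 1) * a = q * a + a := by ring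
      omega

theorem stmt_19 (a x : ℕ) (ha : 0 < a) (hx : 0 < x) (hxa : x < a - 1)
    (S : Set ℕ)
    (hS : S = {m | ∃ cc : Fin (x + 1) → ℕ, ∑ i, cc i * (a + (i : ℕ)) = m})
    (n : ℕ) (hn : n = (a - 1 + x - 1) / x) :
    (ordNum S : ℚ) =
      if Odd n then ((n : ℚ)^2 - 1) / 8 * x + ((n : ℚ) - 1) / 2
      else (n : ℚ) / 2 * ((a : ℚ) - 1) - (n : ℚ) * (3 * (n : ℚ) - 2) / 8 * x := by
  have hx2 : x + 2 ≤ a := by omega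
  set b := a - 1 with hb
  have hab : a = b + 1 := by omega
  have hxb : x < b := hxa
  -- facts about n
  have hdm : x * ((a - 1 + x - 1) / x) + (a - 1 + x - 1) % x = a - 1 + x - 1 :=
    Nat.div_add_mod _ _
  have hmod : (a - 1 + x - 1) % x < x := Nat.mod_lt _ hx
  have hxn : x * n = n * x := Nat.mul_comm x n
  rw [← hn] at hdm
  have hnx1 : b ≤ n * x := by omega
  have hnx2 : n * x < b + x := by omega
  have hn2 : 2 ≤ n := by
    by_contra h
    have h1 : n * x ≤ 1 * x := Nat.mul_le_mul_right x (by omega)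
    omega
  have hkxb : ∀ k < n, k * x < b := by
    intro k hk
    have h1 : (k + 1) * x ≤ n * x := Nat.mul_le_mul_right x (by omega)
    have h2 : (k + 1) * x = k * x + x := by ring
    omega
  -- the gap set
  set G : Finset ℕ :=
    (Finset.range n).biUnion (fun k => Finset.Icc (k*(a+x)+1) ((k+1)*a - 1)) with hG
  have hmemG : ∀ m, m ∈ G ↔ ∃ k < n, k*(a+x)+1 ≤ m ∧ m ≤ (k+1)*a - 1 := by
    intro m
    simp [hG, Finset.mem_biUnion, Finset.mem_Icc, Finset.mem_range]
  have hcompl : ∀ m : ℕ, m ∈ S ↔ m ∉ G := by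
    intro m
    rw [hS, Set.mem_setOf_eq, aux_memS a x hx m]
    constructor
    · rintro ⟨k, hk1, hk2⟩ hmG
      rw [hmemG] at hmG
      obtain ⟨j, hjn, hj1, hj2⟩ := hmG
      rcases le_or_gt k j with h | h
      · have h5 := Nat.mul_le_mul_right (a + x) h
        omega
      · have h5 : (j+1)*a ≤ k*a := Nat.mul_le_mul_right a h
        omega
    · intro hmG
      by_cases hm0 : m = 0
      · exact ⟨0, by omega, by omega⟩
      rcases lt_or_ge m a with hma | hma
      · exfalso; exact hmG ((hmemG m).2 ⟨0, by omega, by omega, by omega⟩)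
      · set j := m / a with hj
        have hdm2 : a * j + m % a = m := Nat.div_add_mod m a
        have hmod2 : m % a < a := Nat.mod_lt _ (by omega)
        have hc : a * j = j * a := Nat.mul_comm a j
        have hja1 : j * a ≤ m := by omega
        have hje : (j+1)*a = j*a + a := by ring
        have hja2 : m < (j+1)*a := by omega
        rcases le_or_gt m (j*(a+x)) with hle | hlt
        · exact ⟨j, hja1, hle⟩
        · exfalso
          have h2 : j*(a+x) = j*a + j*x := by ring
          rcases lt_or_ge j n with hjn | hjn
          · exact hmG ((hmemG m).2 ⟨j, hjn, by omega, by omega⟩)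
          · have h1 : n * x ≤ j * x := Nat.mul_le_mul_right x hjn
            omega
  have hSset : S = (↑G : Set ℕ)ᶜ := by
    ext m
    simp [hcompl m]
  have hScompl : Sᶜ = (↑G : Set ℕ) := by rw [hSset, compl_compl]
  have hgen : genus S = G.card := by rw [genus, hScompl, Set.ncard_coe_finset]
  set g := G.card with hgdef
  -- disjointness of the gap intervals
  have hdisj : ∀ k ∈ Finset.range n, ∀ k' ∈ Finset.range n, k ≠ k' →
      Disjoint (Finset.Icc (k*(a+x)+1) ((k+1)*a - 1))
        (Finset.Icc (k'*(a+x)+1) ((k'+1)*a - 1)) := by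
    have key : ∀ k k' : ℕ, k < k' →
        Disjoint (Finset.Icc (k*(a+x)+1) ((k+1)*a - 1))
          (Finset.Icc (k'*(a+x)+1) ((k'+1)*a - 1)) := by
      intro k k' hkk'
      rw [Finset.disjoint_left]
      intro m hm1 hm2
      rw [Finset.mem_Icc] at hm1 hm2
      have h1 : (k+1)*(a+x) ≤ k'*(a+x) := Nat.mul_le_mul_right _ hkk'
      have h2 : (k+1)*(a+x) = (k+1)*a + (k+1)*x := by ring
      omega
    intro k hk k' hk' hne
    rcases hne.lt_or_gt with h | h
    · exact key _ _ h
    · exact (key _ _ h).symm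
  have hcard : ∀ k < n, (Finset.Icc (k*(a+x)+1) ((k+1)*a - 1)).card = b - k*x := by
    intro k hk
    rw [Nat.card_Icc]
    have h2 : k*x < b := hkxb k hk
    have h3 : (k+1)*a = k*a + a := by ring
    have h4 : k*(a+x) = k*a + k*x := by ring
    omega
  have hgsum : g = ∑ k ∈ Finset.range n, (b - k*x) := by
    rw [hgdef, hG, Finset.card_biUnion hdisj]
    exact Finset.sum_congr rfl fun k hk => hcard k (Finset.mem_range.mp hk)
  -- Gauss sum in ℚ
  have gauss : ∀ N : ℕ, (∑ k ∈ Finset.range N, (k:ℚ)) = N*(N-1)/2 := by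
    intro N
    induction N with
    | zero => simp
    | succ N ih => rw [Finset.sum_range_succ, ih]; push_cast; ring
  have hgQ : (g:ℚ) = n*b - x*(n*(n-1))/2 := by
    rw [hgsum, Nat.cast_sum]
    rw [Finset.sum_congr rfl (fun k hk => show ((b - k*x : ℕ) : ℚ) = (b:ℚ) - k*x by
      have h1 : k*x ≤ b := le_of_lt (hkxb k (Finset.mem_range.mp hk))
      push_cast [Nat.cast_sub h1]; ring)]
    rw [Finset.sum_sub_distrib, Finset.sum_const, Finset.card_range, nsmul_eq_mul]
    have : ∑ k ∈ Finset.range n, ((k:ℚ) * x) = (∑ k ∈ Finset.range n, (k:ℚ)) * x :=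
      (Finset.sum_mul _ _ _).symm
    rw [this, gauss n]
    ring
  -- ordinarization number as count of gaps above g
  have hSIcc : S ∩ Set.Icc 1 (genus S) = ↑(Finset.Icc 1 g \ G) := by
    rw [hgen, hSset]
    ext m
    simp only [Set.mem_inter_iff, Set.mem_compl_iff, Finset.mem_coe, Finset.mem_sdiff,
      Finset.mem_Icc, Set.mem_Icc]
    tauto
  have hr1 : ordNum S = (Finset.Icc 1 g \ G).card := by
    rw [ordNum, hSIcc, Set.ncard_coe_finset]
  have hG1 : ∀ m ∈ G, 1 ≤ m := by
    intro m hm; rw [hmemG] at hm; omega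
  have hinter : Finset.Icc 1 g ∩ G = G.filter (fun m => m ≤ g) := by
    ext m
    simp only [Finset.mem_inter, Finset.mem_Icc, Finset.mem_filter]
    constructor
    · tauto
    · rintro ⟨h1, h2⟩; exact ⟨⟨hG1 m h1, h2⟩, h1⟩
  set F := G.filter (fun m => g < m) with hF
  have hsplit : (G.filter (fun m => m ≤ g)).card + F.card = g := by
    have h := Finset.card_filter_add_card_filter_not (s := G) (p := fun m => m ≤ g)
    simp only [not_le] at h
    rw [hF]
    exact h
  have hFle : F.card ≤ g := by
    calc F.card ≤ G.card := Finset.card_filter_le _ _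
    _ = g := rfl
  have hrF : ordNum S = F.card := by
    rw [hr1]
    have h1 := Finset.card_sdiff_add_card_inter (Finset.Icc 1 g) G
    rw [hinter] at h1
    have h2 : (Finset.Icc 1 g).card = g := by rw [Nat.card_Icc]; omega
    omega
  have hFcard : F.card = ∑ k ∈ Finset.range n,
      ((Finset.Icc (k*(a+x)+1) ((k+1)*a-1)).filter (fun m => g < m)).card := by
    rw [hF, hG, Finset.filter_biUnion]
    exact Finset.card_biUnion (fun k hk k' hk' hne =>
      Finset.disjoint_filter_filter (hdisj k hk k' hk' hne))
  have hfiltIcc : ∀ lo hi : ℕ,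
      (Finset.Icc lo hi).filter (fun m => g < m) = Finset.Icc (max lo (g+1)) hi := by
    intro lo hi
    ext m
    simp only [Finset.mem_filter, Finset.mem_Icc, le_max_iff, max_le_iff]
    omega
  have habQ : (a:ℚ) = b + 1 := by rw [hab]; push_cast; ring
  rcases Nat.even_or_odd n with he | ho
  · -- even case
    rw [if_neg (Nat.not_odd_iff_even.mpr he)]
    obtain ⟨t, ht⟩ : ∃ t, n = 2*t := by obtain ⟨t, ht⟩ := he; exact ⟨t, by omega⟩
    have ht1 : 1 ≤ t := by omega
    have htQ : (n:ℚ) = 2*t := by rw [ht]; push_cast; ring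
    have hgQ' : (g:ℚ) = 2*t*b - t*(2*t-1)*x := by rw [hgQ, htQ]; ring
    have hnxQ1 : (b:ℚ) ≤ 2*t*x := by
      have h : b ≤ 2*t*x := by rw [← ht]; exact hnx1
      exact_mod_cast h
    have hnxQ2 : 2*t*x + 1 ≤ (b:ℚ) + x := by
      have h : 2*t*x + 1 ≤ b + x := by rw [← ht]; omega
      exact_mod_cast h
    have E1 : t * a ≤ g + 1 := by
      rw [← Nat.cast_le (α := ℚ)]
      push_cast
      rw [habQ, hgQ']
      linarith [mul_nonneg (show (0:ℚ) ≤ t by positivity)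
        (show (0:ℚ) ≤ (b:ℚ) - (2*t-1)*x - 1 by linarith)]
    have E2 : g ≤ t * (a + x) := by
      rw [← Nat.cast_le (α := ℚ)]
      push_cast
      rw [habQ, hgQ']
      linarith [mul_nonneg (show (0:ℚ) ≤ t by positivity)
        (show (0:ℚ) ≤ 2*t*x - (b:ℚ) by linarith)]
    have hterm : ∀ k ∈ Finset.range n,
        ((Finset.Icc (k*(a+x)+1) ((k+1)*a-1)).filter (fun m => g < m)).card
          = if k < t then 0 else b - k*x := by
      intro k hk
      rw [hfiltIcc, Nat.card_Icc]
      have hkn := Finset.mem_range.mp hk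
      have h4 : k*x < b := hkxb k hkn
      have h2 : k*(a+x) = k*a + k*x := by ring
      have h3 : (k+1)*a = k*a + a := by ring
      rcases lt_or_ge k t with h | h
      · rw [if_pos h]
        have h1 : (k+1)*a ≤ t*a := Nat.mul_le_mul_right a (by omega)
        omega
      · rw [if_neg (not_lt.mpr h)]
        have h1 : t*(a+x) ≤ k*(a+x) := Nat.mul_le_mul_right _ h
        omega
    have hsum0 : ∑ k ∈ Finset.range n,
        ((Finset.Icc (k*(a+x)+1) ((k+1)*a-1)).filter (fun m => g < m)).card
        = ∑ k ∈ Finset.Ico t n, (b - k*x) := by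
      rw [Finset.sum_congr rfl hterm]
      rw [← Finset.sum_range_add_sum_Ico _ (show t ≤ n by omega)]
      rw [Finset.sum_congr rfl (fun k hk => if_pos (Finset.mem_range.mp hk))]
      rw [Finset.sum_const_zero, zero_add]
      exact Finset.sum_congr rfl (fun k hk => if_neg (not_lt.mpr (Finset.mem_Ico.mp hk).1))
    have hcast : ((∑ k ∈ Finset.Ico t n, (b - k*x) : ℕ) : ℚ)
        = ∑ k ∈ Finset.Ico t n, ((b:ℚ) - k*x) := by
      rw [Nat.cast_sum]
      exact Finset.sum_congr rfl fun k hk => by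
        have h1 : k*x ≤ b := le_of_lt (hkxb k (Finset.mem_Ico.mp hk).2)
        push_cast [Nat.cast_sub h1]; ring
    rw [hrF, hFcard, hsum0, hcast]
    rw [Finset.sum_sub_distrib, Finset.sum_const, Nat.card_Ico, nsmul_eq_mul]
    have hIco : ∑ k ∈ Finset.Ico t n, ((k:ℚ) * x) = (∑ k ∈ Finset.Ico t n, (k:ℚ)) * x :=
      (Finset.sum_mul _ _ _).symm
    rw [hIco, Finset.sum_Ico_eq_sub _ (show t ≤ n by omega), gauss n, gauss t]
    have hnt : ((n - t : ℕ) : ℚ) = t := by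
      have h : n - t = t := by omega
      rw [h]
    rw [hnt, htQ, habQ]
    field_simp
    ring
  · -- odd case
    rw [if_pos ho]
    obtain ⟨t, ht⟩ := ho
    have ht1 : 1 ≤ t := by omega
    have htQ : (n:ℚ) = 2*t+1 := by rw [ht]; push_cast; ring
    have hgQ' : (g:ℚ) = (2*t+1)*b - t*(2*t+1)*x := by rw [hgQ, htQ]; ring
    have hnxQ1 : (b:ℚ) ≤ (2*t+1)*x := by
      have h : b ≤ (2*t+1)*x := by rw [← ht]; exact hnx1
      exact_mod_cast h
    have hnxQ2 : (2*t+1)*x + 1 ≤ (b:ℚ) + x := by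
      have h : (2*t+1)*x + 1 ≤ b + x := by rw [← ht]; omega
      exact_mod_cast h
    have O1 : t * (a + x) ≤ g := by
      rw [← Nat.cast_le (α := ℚ)]
      push_cast
      rw [habQ, hgQ']
      linarith [mul_nonneg (show (0:ℚ) ≤ t + 1 by positivity)
        (show (0:ℚ) ≤ (b:ℚ) - 2*t*x - 1 by linarith)]
    have O2 : g + 1 ≤ (t+1) * a := by
      rw [← Nat.cast_le (α := ℚ)]
      push_cast
      rw [habQ, hgQ']
      linarith [mul_nonneg (show (0:ℚ) ≤ t by positivity)
        (show (0:ℚ) ≤ (2*t+1)*x - (b:ℚ) by linarith)]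
    have hterm : ∀ k ∈ Finset.range n,
        ((Finset.Icc (k*(a+x)+1) ((k+1)*a-1)).filter (fun m => g < m)).card
          = if k < t then 0 else if k = t then (t+1)*a - (g+1) else b - k*x := by
      intro k hk
      rw [hfiltIcc, Nat.card_Icc]
      have hkn := Finset.mem_range.mp hk
      have h4 : k*x < b := hkxb k hkn
      have h2 : k*(a+x) = k*a + k*x := by ring
      have h3 : (k+1)*a = k*a + a := by ring
      rcases lt_trichotomy k t with h | h | h
      · rw [if_pos h]
        have h1 : (k+1)*a ≤ t*a := Nat.mul_le_mul_right a (by omega)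
        have h5 : t*a ≤ t*(a+x) := Nat.mul_le_mul_left t (by omega)
        omega
      · subst h
        rw [if_neg (lt_irrefl k), if_pos rfl]
        omega
      · rw [if_neg (by omega), if_neg (by omega)]
        have h1 : (t+1)*(a+x) ≤ k*(a+x) := Nat.mul_le_mul_right _ (by omega)
        have h6 : (t+1)*(a+x) = (t+1)*a + (t+1)*x := by ring
        omega
    have hsum0 : ∑ k ∈ Finset.range n,
        ((Finset.Icc (k*(a+x)+1) ((k+1)*a-1)).filter (fun m => g < m)).card
        = ((t+1)*a - (g+1)) + ∑ k ∈ Finset.Ico (t+1) n, (b - k*x) := by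
      rw [Finset.sum_congr rfl hterm]
      rw [← Finset.sum_range_add_sum_Ico _ (show t ≤ n by omega)]
      rw [Finset.sum_congr rfl (fun k hk => if_pos (Finset.mem_range.mp hk))]
      rw [Finset.sum_const_zero, zero_add]
      rw [Finset.sum_eq_sum_Ico_succ_bot (show t < n by omega)]
      rw [if_neg (lt_irrefl t), if_pos rfl]
      congr 1
      refine Finset.sum_congr rfl fun k hk => ?_
      have hmem := Finset.mem_Ico.mp hk
      rw [if_neg (by omega), if_neg (by omega)]
    have hcast : ((∑ k ∈ Finset.Ico (t+1) n, (b - k*x) : ℕ) : ℚ)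
        = ∑ k ∈ Finset.Ico (t+1) n, ((b:ℚ) - k*x) := by
      rw [Nat.cast_sum]
      exact Finset.sum_congr rfl fun k hk => by
        have h1 : k*x ≤ b := le_of_lt (hkxb k (Finset.mem_Ico.mp hk).2)
        push_cast [Nat.cast_sub h1]; ring
    have hA : (((t+1)*a - (g+1) : ℕ) : ℚ) = (t+1)*a - (g+1) := by
      rw [Nat.cast_sub O2]; push_cast; ring
    rw [hrF, hFcard, hsum0, Nat.cast_add, hA, hcast]
    rw [Finset.sum_sub_distrib, Finset.sum_const, Nat.card_Ico, nsmul_eq_mul]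
    have hIco : ∑ k ∈ Finset.Ico (t+1) n, ((k:ℚ) * x) = (∑ k ∈ Finset.Ico (t+1) n, (k:ℚ)) * x :=
      (Finset.sum_mul _ _ _).symm
    rw [hIco, Finset.sum_Ico_eq_sub _ (show t+1 ≤ n by omega), gauss n, gauss (t+1)]
    have hnt : ((n - (t+1) : ℕ) : ℚ) = t := by
      have h : n - (t+1) = t := by omega
      rw [h]
    rw [hnt, hgQ', htQ, habQ]
    field_simp
    push_cast
    ring
end
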